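/- arXiv:2601.10830 — 14 statements merged into one kernel-verified Lean document; each statement's English description precedes it below -/
import Mathlib

section
/- Let H be a finite abelian group of order n ≥ 2, written additively, and let m > 1 be an integer. The m-graph of H is connected if and only if every prime factor of n is a prime factor of m. -/
def mGraph (m : ℕ) (H : Type*) [AddCommGroup H] : SimpleGraph H where
  Adj a b := a ≠ b ∧ (m • a = b ∨ m • b = a)
  symm := ⟨fun _ _ h => ⟨h.1.symm, h.2.symm⟩⟩
  loopless := ⟨fun _ h => h.1 rfl⟩

instance (m : ℕ) (H : Type*) [AddCommGroup H] [DecidableEq H] :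
    DecidableRel (mGraph m H).Adj :=
  fun a b => inferInstanceAs (Decidable (a ≠ b ∧ (m • a = b ∨ m • b = a)))

lemma reach_smul {m : ℕ} {H : Type*} [AddCommGroup H] (x : H) :
    (mGraph m H).Reachable x (m • x) := by
  by_cases h : m • x = x
  · rw [h]
  · exact (SimpleGraph.Adj.reachable ⟨fun he => h he.symm, Or.inl rfl⟩)

lemma reach_pow_smul {m : ℕ} {H : Type*} [AddCommGroup H] (x : H) (k : ℕ) :
    (mGraph m H).Reachable x (m ^ k • x) := by
  induction k with
  | zero => simp only [pow_zero, one_smul]; exact SimpleGraph.Reachable.refl x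
  | succ k ih =>
    have : m ^ (k + 1) • x = m • (m ^ k • x) := by
      rw [pow_succ, mul_comm, mul_smul]
    rw [this]
    exact ih.trans (reach_smul _)

lemma walk_nilpotent {m : ℕ} {H : Type*} [AddCommGroup H] {a b : H}
    (w : (mGraph m H).Walk a b) (h : ∃ j, m ^ j • a = 0) : ∃ j, m ^ j • b = 0 := by
  induction w with
  | nil => exact h
  | @cons a c b hac w ih =>
    apply ih
    obtain ⟨j, hj⟩ := h
    rcases hac.2 with h1 | h1
    · exact ⟨j, by rw [← h1, smul_comm, hj, smul_zero]⟩
    · exact ⟨j + 1, by rw [pow_succ, mul_smul, h1, hj]⟩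

theorem stmt_3 (H : Type*) [AddCommGroup H] [Fintype H]
    (hn : 2 ≤ Fintype.card H) (m : ℕ) (hm : 1 < m) :
    (mGraph m H).Connected ↔
      ∀ p : ℕ, p.Prime → p ∣ Fintype.card H → p ∣ m := by
  constructor
  · intro hc p hp hpn
    haveI := Fact.mk hp
    obtain ⟨x, hx⟩ := exists_prime_addOrderOf_dvd_card p hpn
    obtain ⟨w⟩ := hc.preconnected 0 x
    obtain ⟨j, hj⟩ := walk_nilpotent w ⟨0, by simp⟩
    have : p ∣ m ^ j := hx ▸ addOrderOf_dvd_of_nsmul_eq_zero hj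
    exact hp.dvd_of_dvd_pow this
  · intro hprime
    set n := Fintype.card H with hn'
    have hn0 : n ≠ 0 := by omega
    have hm0 : m ≠ 0 := by omega
    have hdvd : n ∣ m ^ n := by
      rw [← Nat.factorization_le_iff_dvd hn0 (pow_ne_zero _ hm0),
        Nat.factorization_pow]
      intro p
      by_cases hp : p.Prime
      · by_cases hpn : p ∣ n
        · have h1 : 1 ≤ m.factorization p :=
            (Nat.Prime.factorization_pos_of_dvd hp hm0 (hprime p hp hpn))
          calc n.factorization p ≤ n := (Nat.factorization_lt p hn0).le
            _ = n * 1 := (mul_one n).symm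
            _ ≤ n * m.factorization p := Nat.mul_le_mul_left n h1
            _ = (n • m.factorization) p := rfl
        · simp [Nat.factorization_eq_zero_of_not_dvd hpn]
      · simp [Nat.factorization_eq_zero_of_not_prime _ hp]
    constructor
    · intro a b
      have ha : (mGraph m H).Reachable a 0 := by
        have h0 : m ^ n • a = 0 := by
          have : addOrderOf a ∣ m ^ n := (addOrderOf_dvd_card).trans hdvd
          exact addOrderOf_dvd_iff_nsmul_eq_zero.mp this
        exact h0 ▸ reach_pow_smul a n
      have hb : (mGraph m H).Reachable b 0 := by
        have h0 : m ^ n • b = 0 := by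
          have : addOrderOf b ∣ m ^ n := (addOrderOf_dvd_card).trans hdvd
          exact addOrderOf_dvd_iff_nsmul_eq_zero.mp this
        exact h0 ▸ reach_pow_smul b n
      exact ha.trans hb.symm
end

section
/- Let H be a finite abelian group of order n, where n > 1 is squarefree, and let m > 1 be an integer. Then the m-graph of H is connected if and only if n divides m. -/
lemma mGraph_walk_pow {H : Type*} [AddCommGroup H] {m : ℕ} {x y : H}
    (w : (mGraph m H).Walk x y) : ∃ k l : ℕ, m ^ k • x = m ^ l • y := by
  induction w with
  | nil => exact ⟨0, 0, rfl⟩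
  | @cons a b c h _ ih =>
    obtain ⟨k, l, hk⟩ := ih
    rcases h.2 with h1 | h1
    · exact ⟨k + 1, l, by rw [pow_succ, mul_smul, h1]; exact hk⟩
    · refine ⟨k, l + 1, ?_⟩
      rw [← h1, ← mul_smul, ← pow_succ, pow_succ', mul_smul, hk, ← mul_smul, ← pow_succ']

theorem stmt_4 (H : Type*) [AddCommGroup H] [Fintype H]
    (hn : 1 < Fintype.card H) (hsf : Squarefree (Fintype.card H))
    (m : ℕ) (hm : 1 < m) :
    (mGraph m H).Connected ↔ Fintype.card H ∣ m := by
  constructor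
  · intro hc
    have key : ∀ p ∈ (Fintype.card H).primeFactors, p ∣ m := by
      intro p hp
      have hpp : p.Prime := Nat.prime_of_mem_primeFactors hp
      have : Fact p.Prime := ⟨hpp⟩
      obtain ⟨x, hx⟩ := exists_prime_addOrderOf_dvd_card (G := H) p
        (Nat.dvd_of_mem_primeFactors hp)
      obtain ⟨w⟩ := (hc.preconnected x 0)
      obtain ⟨k, l, hkl⟩ := mGraph_walk_pow w
      rw [smul_zero] at hkl
      have : p ∣ m ^ k := hx ▸ addOrderOf_dvd_of_nsmul_eq_zero hkl
      exact hpp.dvd_of_dvd_pow this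
    have := Finset.prod_primes_dvd (s := (Fintype.card H).primeFactors) m
      (fun p hp => (Nat.prime_of_mem_primeFactors hp).prime) key
    rwa [Nat.prod_primeFactors_of_squarefree hsf] at this
  · intro hdvd
    have hzero : ∀ a : H, m • a = 0 := by
      intro a
      obtain ⟨c, rfl⟩ := hdvd
      simp [mul_smul, card_nsmul_eq_zero]
    have hreach : ∀ a : H, (mGraph m H).Reachable a 0 := by
      intro a
      by_cases ha : a = 0
      · exact ha ▸ SimpleGraph.Reachable.refl _
      · exact SimpleGraph.Adj.reachable ⟨ha, Or.inl (hzero a)⟩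
    rw [SimpleGraph.connected_iff]
    exact ⟨fun a b => (hreach a).trans (hreach b).symm, ⟨0⟩⟩
end

section
/- Let n > 1, m > 1 be integers such that every prime factor of n divides m, and let k = gcd(m, n). If a ∈ ℤ/nℤ is nonzero and k does not divide a (as an integer with 0 ≤ a < n), then in the m-graph of ℤ/nℤ the degree of a equals 1. -/
theorem stmt_6 (n m : ℕ) [NeZero n] (hn : 1 < n) (hm : 1 < m)
    (hp : ∀ p : ℕ, p.Prime → p ∣ n → p ∣ m)
    (a : ZMod n) (ha : a ≠ 0) (hka : ¬ Nat.gcd m n ∣ a.val) :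
    (mGraph m (ZMod n)).degree a = 1 := by
  have hnosol : ∀ b : ZMod n, m • b ≠ a := by
    intro b hb
    apply hka
    have : a = ((m * b.val : ℕ) : ZMod n) := by
      rw [← hb]
      push_cast
      rw [ZMod.natCast_val, ZMod.cast_id]
      simp [nsmul_eq_mul]
    have hval : a.val = (m * b.val) % n := by rw [this, ZMod.val_natCast]
    rw [hval, Nat.dvd_mod_iff (Nat.gcd_dvd_right m n)]
    exact Dvd.dvd.mul_right (Nat.gcd_dvd_left m n) _
  have hne : m • a ≠ a := hnosol a
  have hnbr : (mGraph m (ZMod n)).neighborFinset a = {m • a} := by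
    ext b
    simp only [SimpleGraph.mem_neighborFinset, Finset.mem_singleton]
    constructor
    · rintro ⟨hab, h | h⟩
      · exact h.symm
      · exact absurd h (hnosol b)
    · rintro rfl
      exact ⟨fun h => hne h.symm, Or.inl rfl⟩
  rw [SimpleGraph.degree, hnbr, Finset.card_singleton]
end

section
/- Let n > 1, m > 1 be integers such that every prime factor of n divides m, and let k = gcd(m, n). If a ∈ ℤ/nℤ is nonzero and k divides a (as an integer with 0 ≤ a < n), then in the m-graph of ℤ/nℤ the degree of a equals k + 1. -/
private lemma aux_coprime (n c : ℕ) (hc : 0 < c)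
    (h : ∀ p : ℕ, p.Prime → p ∣ c → p ∣ n → False) : Nat.Coprime c n := by
  by_contra hg
  have h2 : 2 ≤ Nat.gcd c n := by
    have h0 : Nat.gcd c n ≠ 0 := fun h' => hc.ne' (Nat.eq_zero_of_gcd_eq_zero_left h')
    omega
  have hp : (Nat.gcd c n).minFac.Prime := Nat.minFac_prime (by omega)
  exact h _ hp ((Nat.minFac_dvd _).trans (Nat.gcd_dvd_left c n))
    ((Nat.minFac_dvd _).trans (Nat.gcd_dvd_right c n))

theorem stmt_7 (n m : ℕ) [NeZero n] (hn : 1 < n) (hm : 1 < m)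
    (hp : ∀ p : ℕ, p.Prime → p ∣ n → p ∣ m)
    (a : ZMod n) (ha : a ≠ 0) (hka : Nat.gcd m n ∣ a.val) :
    (mGraph m (ZMod n)).degree a = Nat.gcd m n + 1 := by
  set k := Nat.gcd m n with hkdef
  have hn0 : 0 < n := lt_trans one_pos hn
  have hk0 : 0 < k := Nat.gcd_pos_of_pos_right m hn0
  have hkn : k ∣ n := Nat.gcd_dvd_right m n
  have hkm : k ∣ m := Nat.gcd_dvd_left m n
  set d := n / k with hddef
  have hkd : k * d = n := Nat.mul_div_cancel' hkn
  have hd0 : 0 < d := by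
    rcases Nat.eq_zero_or_pos d with h | h
    · rw [h, Nat.mul_zero] at hkd; omega
    · exact h
  -- units from coprimality
  have hcop : ∀ c : ℕ, (∀ p : ℕ, p.Prime → p ∣ c → p ∣ n → False) → 0 < c →
      ∀ x : ZMod n, (c : ZMod n) * x = 0 → x = 0 := by
    intro c hpc hc x hx
    have hu : IsUnit (c : ZMod n) := (ZMod.isUnit_iff_coprime c n).2 (aux_coprime n c hc hpc)
    exact (hu.mul_right_eq_zero).mp hx
  have hzero1 : ∀ x : ZMod n, ((m - 1 : ℕ) : ZMod n) * x = 0 → x = 0 := by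
    refine hcop (m - 1) ?_ (by omega)
    intro p hpp hp1 hpn
    have hpm : p ∣ m := hp p hpp hpn
    have : p ∣ m - (m - 1) := Nat.dvd_sub hpm hp1
    simp only [Nat.sub_sub_self (by omega : 1 ≤ m)] at this
    exact hpp.one_lt.ne' (Nat.dvd_one.mp this)
  have hzero2 : ∀ x : ZMod n, ((m * m - 1 : ℕ) : ZMod n) * x = 0 → x = 0 := by
    have h4 : 2 * 2 ≤ m * m := Nat.mul_le_mul hm hm
    refine hcop (m * m - 1) ?_ (by omega)
    intro p hpp hp1 hpn
    have hpm : p ∣ m := hp p hpp hpn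
    have : p ∣ m * m - (m * m - 1) := Nat.dvd_sub (hpm.mul_left m) hp1
    have h1 : m * m - (m * m - 1) = 1 := by omega
    rw [h1] at this
    exact hpp.one_lt.ne' (Nat.dvd_one.mp this)
  -- m • a ≠ a
  have hma : m • a ≠ a := by
    intro h
    apply ha
    apply hzero1
    have : ((m : ZMod n) - 1) * a = 0 := by
      rw [sub_mul, one_mul, sub_eq_zero]
      rw [nsmul_eq_mul] at h; exact h
    rwa [Nat.cast_sub (by omega : 1 ≤ m), Nat.cast_one]
  -- m • (m • a) ≠ a
  have hmma : m • (m • a) ≠ a := by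
    intro h
    apply ha
    apply hzero2
    have h' : ((m : ZMod n) * (m : ZMod n)) * a = a := by
      rw [nsmul_eq_mul, nsmul_eq_mul] at h
      rw [mul_assoc]; exact h
    have : ((m : ZMod n) * m - 1) * a = 0 := by
      rw [sub_mul, one_mul, sub_eq_zero]; exact h'
    have h4 : 2 * 2 ≤ m * m := Nat.mul_le_mul hm hm
    rwa [Nat.cast_sub (by omega : 1 ≤ m * m), Nat.cast_mul, Nat.cast_one]
  -- key divisibility characterization of the kernel
  have hker : ∀ x : ZMod n, m • x = 0 ↔ d ∣ x.val := by
    intro x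
    have hx : ((x.val : ℕ) : ZMod n) = x := ZMod.natCast_rightInverse x
    constructor
    · intro h
      rw [nsmul_eq_mul, ← hx, ← Nat.cast_mul] at h
      have hdvd : n ∣ m * x.val := (ZMod.natCast_eq_zero_iff _ n).mp h
      have hmk : k * (m / k) = m := Nat.mul_div_cancel' hkm
      have hcop' : (m / k).Coprime d := Nat.coprime_div_gcd_div_gcd hk0
      have h2 : k * d ∣ k * ((m / k) * x.val) := by
        rw [hkd, ← mul_assoc, hmk]; exact hdvd
      have h3 : d ∣ (m / k) * x.val := (mul_dvd_mul_iff_left hk0.ne').mp h2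
      exact (Nat.Coprime.dvd_of_dvd_mul_left (hcop'.symm) h3)
    · intro ⟨t, ht⟩
      rw [nsmul_eq_mul, ← hx, ← Nat.cast_mul]
      apply (ZMod.natCast_eq_zero_iff _ n).mpr
      obtain ⟨m', hm'⟩ := hkm
      refine ⟨m' * t, ?_⟩
      rw [ht, hm', ← hkd]; ring
  -- existence of a preimage b₀ with m • b₀ = a
  have hkz : (k : ZMod n) = (m : ZMod n) * ((Nat.gcdA m n : ℤ) : ZMod n) := by
    have := Nat.gcd_eq_gcd_ab m n
    have h2 : ((k : ℤ) : ZMod n) = (((m : ℤ) * Nat.gcdA m n + (n : ℤ) * Nat.gcdB m n : ℤ) : ZMod n) := by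
      exact_mod_cast congrArg (fun z : ℤ => (z : ZMod n)) this
    push_cast at h2
    rw [ZMod.natCast_self] at h2
    simpa using h2
  obtain ⟨s, hs⟩ := hka
  set b₀ : ZMod n := ((Nat.gcdA m n : ℤ) : ZMod n) * (s : ZMod n) with hb₀
  have hb0 : m • b₀ = a := by
    rw [nsmul_eq_mul, hb₀, ← mul_assoc, ← hkz]
    have : ((a.val : ℕ) : ZMod n) = a := ZMod.natCast_rightInverse a
    rw [← this, hs]
    push_cast
    ring
  -- the solution set S
  classical
  set S : Finset (ZMod n) := Finset.univ.filter (fun b : ZMod n => m • b = a) with hS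
  have hScard : S.card = k := by
    rw [← Finset.card_range k]
    symm
    refine Finset.card_bij' (fun i _ => b₀ + ((i * d : ℕ) : ZMod n))
      (fun b _ => (b - b₀).val / d) ?_ ?_ ?_ ?_
    · intro i hi
      simp only [hS, Finset.mem_filter, Finset.mem_univ, true_and]
      rw [smul_add, hb0]
      have : m • ((i * d : ℕ) : ZMod n) = 0 := by
        rw [hker, ZMod.val_natCast]
        exact (Nat.dvd_mod_iff ⟨k, by rw [← hkd, mul_comm]⟩).mpr ⟨i, mul_comm i d⟩
      rw [this, add_zero]
    · intro b hb
      simp only [hS, Finset.mem_filter, Finset.mem_univ, true_and] at hb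
      have hmem : m • (b - b₀) = 0 := by rw [smul_sub, hb, hb0, sub_self]
      have hdvd : d ∣ (b - b₀).val := (hker _).mp hmem
      rw [Finset.mem_range]
      rw [Nat.div_lt_iff_lt_mul hd0]
      calc (b - b₀).val < n := ZMod.val_lt _
        _ = k * d := hkd.symm
    · intro i hi
      rw [Finset.mem_range] at hi
      have hlt : i * d < n := by
        calc i * d < k * d := (Nat.mul_lt_mul_right hd0).mpr hi
          _ = n := hkd
      simp only [add_sub_cancel_left]
      rw [ZMod.val_cast_of_lt hlt, Nat.mul_div_cancel _ hd0]
    · intro b hb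
      simp only [hS, Finset.mem_filter, Finset.mem_univ, true_and] at hb
      have hmem : m • (b - b₀) = 0 := by rw [smul_sub, hb, hb0, sub_self]
      have hdvd : d ∣ (b - b₀).val := (hker _).mp hmem
      show b₀ + (((b - b₀).val / d * d : ℕ) : ZMod n) = b
      rw [Nat.div_mul_cancel hdvd, ZMod.natCast_rightInverse (b - b₀)]
      ring
  -- neighbor finset
  have hnot : m • a ∉ S := by
    simp only [hS, Finset.mem_filter, Finset.mem_univ, true_and]
    exact hmma
  have hnbhd : (mGraph m (ZMod n)).neighborFinset a = insert (m • a) S := by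
    ext b
    rw [SimpleGraph.mem_neighborFinset, Finset.mem_insert]
    simp only [hS, Finset.mem_filter, Finset.mem_univ, true_and]
    constructor
    · rintro ⟨hab, h | h⟩
      · left; exact h.symm
      · right; exact h
    · rintro (h | h)
      · subst h
        exact ⟨fun h' => hma h'.symm, Or.inl rfl⟩
      · refine ⟨fun h' => hma ?_, Or.inr h⟩
        rw [← h'] at h; exact h
  rw [SimpleGraph.degree, hnbhd, Finset.card_insert_of_notMem hnot, hScard]
end

section
/- Let n > 1, m > 1 be integers such that every prime factor of n divides m. Then the m-graph of ℤ/nℤ has exactly n − 1 edges. -/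
theorem stmt_8 (n m : ℕ) [NeZero n] (hn : 1 < n) (hm : 1 < m)
    (hp : ∀ p : ℕ, p.Prime → p ∣ n → p ∣ m) :
    (mGraph m (ZMod n)).edgeFinset.card = n - 1 := by
  classical
  have cop1 : Nat.Coprime (m - 1) n := by
    by_contra h
    obtain ⟨p, pp, pd2, pd1⟩ := Nat.Prime.not_coprime_iff_dvd.mp h
    have hpm := hp p pp pd1
    have h1 : p ∣ m - (m - 1) := Nat.dvd_sub hpm pd2
    rw [show m - (m - 1) = 1 from by omega] at h1
    exact pp.ne_one (Nat.dvd_one.mp h1)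
  have cop2 : Nat.Coprime (m + 1) n := by
    by_contra h
    obtain ⟨p, pp, pd2, pd1⟩ := Nat.Prime.not_coprime_iff_dvd.mp h
    have hpm := hp p pp pd1
    have h1 : p ∣ (m + 1) - m := Nat.dvd_sub pd2 hpm
    rw [show (m + 1) - m = 1 from by omega] at h1
    exact pp.ne_one (Nat.dvd_one.mp h1)
  have u1 : IsUnit ((m : ZMod n) - 1) := by
    have := (ZMod.isUnit_iff_coprime (m - 1) n).mpr cop1
    rwa [Nat.cast_sub hm.le, Nat.cast_one] at this
  have u2 : IsUnit ((m : ZMod n) + 1) := by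
    have := (ZMod.isUnit_iff_coprime (m + 1) n).mpr cop2
    rwa [Nat.cast_add, Nat.cast_one] at this
  have hfix : ∀ a : ZMod n, (m : ZMod n) * a = a → a = 0 := by
    intro a h
    have h0 : ((m : ZMod n) - 1) * a = 0 := by
      rw [sub_mul, one_mul, h, sub_self]
    exact (u1.mul_right_eq_zero).mp h0
  have hfix2 : ∀ a : ZMod n, (m : ZMod n) * ((m : ZMod n) * a) = a → a = 0 := by
    intro a h
    have h0 : (((m : ZMod n) - 1) * ((m : ZMod n) + 1)) * a = 0 := by
      have : ((m : ZMod n) - 1) * ((m : ZMod n) + 1) * a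
          = (m : ZMod n) * ((m : ZMod n) * a) - a := by ring
      rw [this, h, sub_self]
    exact ((u1.mul u2).mul_right_eq_zero).mp h0
  have hsmul : ∀ a : ZMod n, m • a = (m : ZMod n) * a := fun a => nsmul_eq_mul m a
  have hne : ∀ a : ZMod n, a ≠ 0 → a ≠ (m : ZMod n) * a := by
    intro a ha h
    exact ha (hfix a h.symm)
  have hb := Finset.card_bij
    (s := (Finset.univ.erase (0 : ZMod n))) (t := (mGraph m (ZMod n)).edgeFinset)
    (fun a _ => s(a, (m : ZMod n) * a))
    (by
      intro a ha
      have ha0 : a ≠ 0 := Finset.ne_of_mem_erase ha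
      rw [SimpleGraph.mem_edgeFinset, SimpleGraph.mem_edgeSet]
      exact ⟨hne a ha0, Or.inl (hsmul a)⟩)
    (by
      intro a ha b hb h
      have ha0 : a ≠ 0 := Finset.ne_of_mem_erase ha
      have hb0 : b ≠ 0 := Finset.ne_of_mem_erase hb
      rw [Sym2.eq_iff] at h
      rcases h with ⟨h1, _⟩ | ⟨h1, h2⟩
      · exact h1
      · exfalso
        apply hb0
        apply hfix2
        rw [← h1, h2])
    (by
      intro e he
      induction e using Sym2.ind with
      | _ x y =>
        rw [SimpleGraph.mem_edgeFinset, SimpleGraph.mem_edgeSet] at he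
        obtain ⟨hxy, h | h⟩ := he
        · rw [hsmul] at h
          have hx0 : x ≠ 0 := by
            intro h0
            apply hxy
            rw [h0] at h ⊢
            rw [← h, mul_zero]
          exact ⟨x, Finset.mem_erase.mpr ⟨hx0, Finset.mem_univ x⟩, by show s(x, (m : ZMod n) * x) = s(x, y); rw [h]⟩
        · rw [hsmul] at h
          have hy0 : y ≠ 0 := by
            intro h0
            apply hxy
            rw [h0] at h ⊢
            rw [← h, mul_zero]
          exact ⟨y, Finset.mem_erase.mpr ⟨hy0, Finset.mem_univ y⟩, by
            show s(y, (m : ZMod n) * y) = s(x, y)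
            rw [h, Sym2.eq_swap]⟩)
  rw [← hb, Finset.card_erase_of_mem (Finset.mem_univ _), Finset.card_univ, ZMod.card]
end

section
/- Let n > 1, m > 1 be integers such that every prime factor of n divides m. Then the m-graph of ℤ/nℤ is a tree (it is connected and acyclic). -/
lemma aux_dvd_pow (n m : ℕ) (hn : 1 < n) (hm : 1 < m)
    (hp : ∀ p : ℕ, p.Prime → p ∣ n → p ∣ m) : n ∣ m ^ n := by
  have hn0 : n ≠ 0 := by omega
  have hmn0 : m ^ n ≠ 0 := pow_ne_zero _ (by omega)
  rw [← Nat.factorization_le_iff_dvd hn0 hmn0, Finsupp.le_def]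
  intro p
  rcases Nat.eq_zero_or_pos (n.factorization p) with h | h
  · simp [h]
  · have hps : p ∈ n.primeFactors := by
      rw [← Nat.support_factorization]
      exact Finsupp.mem_support_iff.mpr h.ne'
    have hpp : p.Prime := Nat.prime_of_mem_primeFactors hps
    have hpn : p ∣ n := Nat.dvd_of_mem_primeFactors hps
    have hpm : p ∣ m := hp p hpp hpn
    have h1 : 1 ≤ m.factorization p := hpp.factorization_pos_of_dvd (by omega) hpm
    have h2 : n.factorization p < n := Nat.factorization_lt p hn0
    have : (m ^ n).factorization p = n * m.factorization p := by
      rw [Nat.factorization_pow]; rfl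
    rw [this]
    calc n.factorization p ≤ n := h2.le
      _ = n * 1 := (mul_one n).symm
      _ ≤ n * m.factorization p := Nat.mul_le_mul_left n h1

theorem stmt_9 (n m : ℕ) (hn : 1 < n) (hm : 1 < m)
    (hp : ∀ p : ℕ, p.Prime → p ∣ n → p ∣ m) :
    (mGraph m (ZMod n)).IsTree := by
  haveI : NeZero n := ⟨by omega⟩
  have hpow0 : ((m : ZMod n)) ^ n = 0 := by
    have := (ZMod.natCast_eq_zero_iff (m ^ n) n).mpr (aux_dvd_pow n m hn hm hp)
    push_cast at this
    exact this
  have hsmul : ∀ x : ZMod n, m • x = (m : ZMod n) * x := fun x => nsmul_eq_mul m x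
  have hex : ∀ x : ZMod n, ∃ k, (m : ZMod n) ^ k * x = 0 :=
    fun x => ⟨n, by rw [hpow0, zero_mul]⟩
  set h : ZMod n → ℕ := fun x => Nat.find (hex x) with hdef
  have hspec : ∀ x : ZMod n, (m : ZMod n) ^ (h x) * x = 0 := fun x => Nat.find_spec (hex x)
  -- key neighbor lemma: if m • w = u and w ≠ u then h u < h w
  have hkey : ∀ w u : ZMod n, w ≠ u → (m : ZMod n) * w = u → h u < h w := by
    intro w u hne hmw
    have hw0 : w ≠ 0 := by
      rintro rfl
      rw [mul_zero] at hmw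
      exact hne hmw
    have hw1 : 1 ≤ h w := by
      by_contra hcon
      have h0 : h w = 0 := by omega
      have hs := hspec w
      rw [h0, pow_zero, one_mul] at hs
      exact hw0 hs
    have : (m : ZMod n) ^ (h w - 1) * u = 0 := by
      rw [← hmw, ← mul_assoc, ← pow_succ, Nat.sub_add_cancel hw1]
      exact hspec w
    have h2 : h u ≤ h w - 1 := Nat.find_le this
    omega
  constructor
  · -- connected
    have hreach : ∀ (k : ℕ) (x : ZMod n), (m : ZMod n) ^ k * x = 0 →
        (mGraph m (ZMod n)).Reachable x 0 := by
      intro k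
      induction k with
      | zero => intro x hx; rw [pow_zero, one_mul] at hx; rw [hx]
      | succ k ih =>
        intro x hx
        have h1 : (m : ZMod n) ^ k * ((m : ZMod n) * x) = 0 := by
          rw [← mul_assoc, ← pow_succ]; exact hx
        have h2 := ih _ h1
        by_cases hxe : x = (m : ZMod n) * x
        · rw [hxe]; exact h2
        · have hadj : (mGraph m (ZMod n)).Adj x ((m : ZMod n) * x) := (show x ≠ _ ∧ _ from ⟨hxe, Or.inl (hsmul x)⟩)
          exact hadj.reachable.trans h2
    exact SimpleGraph.Connected.mk fun a b =>
      (hreach n a (by rw [hpow0, zero_mul])).trans (hreach n b (by rw [hpow0, zero_mul])).symm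
  · -- acyclic
    intro v c hc
    obtain ⟨u, hu_mem', hu_max'⟩ := Finset.exists_max_image c.support.toFinset h
      ⟨v, by simp [List.mem_toFinset]⟩
    have hu_mem : u ∈ c.support := List.mem_toFinset.mp hu_mem'
    have hu_max : ∀ w ∈ c.support, h w ≤ h u := fun w hw =>
      hu_max' w (List.mem_toFinset.mpr hw)
    have hc0 := hc.rotate hu_mem
    set c0 := c.rotate u hu_mem with hc0def
    have hsup : ∀ w ∈ c0.support, h w ≤ h u := by
      intro w hw
      rw [SimpleGraph.Walk.support_eq_cons, List.mem_cons] at hw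
      rcases hw with h1 | hw
      · rw [h1]
      · exact hu_max w (List.mem_of_mem_tail
          ((SimpleGraph.Walk.support_rotate c u hu_mem).mem_iff.mp hw))
    -- decompose the cycle
    have hnn : ¬ c0.Nil := by
      rw [SimpleGraph.Walk.nil_iff_eq_nil]
      exact hc0.ne_nil
    obtain ⟨u₁, hadj, c', hcons⟩ := SimpleGraph.Walk.not_nil_iff.mp hnn
    have hlen3 : 3 ≤ c0.length := hc0.three_le_length
    have hnn' : ¬ c'.Nil := by
      rw [SimpleGraph.Walk.nil_iff_length_eq]
      rw [hcons, SimpleGraph.Walk.length_cons] at hlen3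
      omega
    obtain ⟨u₂, hadj2, c'', hcons2⟩ := SimpleGraph.Walk.not_nil_iff.mp hnn'
    obtain ⟨x, q, hxadj, hq⟩ := SimpleGraph.Walk.exists_cons_eq_concat hadj2 c''
    rw [← hcons2] at hq
    -- neighbor claim: any w adjacent to u in the support is m * u
    have hnbr : ∀ w : ZMod n, (mGraph m (ZMod n)).Adj u w → w ∈ c0.support →
        w = (m : ZMod n) * u := by
      intro w haw hwmem
      rcases haw.2 with h1 | h1
      · rw [← hsmul]; exact h1.symm
      · rw [hsmul] at h1
        exact absurd (hsup w hwmem) (not_le.mpr (hkey w u (fun he => haw.1 he.symm) h1))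
    have hu₁mem : u₁ ∈ c0.support := by
      rw [hcons, SimpleGraph.Walk.support_cons]
      exact List.mem_cons_of_mem _ c'.start_mem_support
    have hxmem : x ∈ c0.support := by
      rw [hcons, SimpleGraph.Walk.support_cons]
      apply List.mem_cons_of_mem
      rw [hq, SimpleGraph.Walk.support_concat]
      exact List.mem_append_left _ q.end_mem_support
    have he1 : u₁ = (m : ZMod n) * u := hnbr u₁ hadj hu₁mem
    have he2 : x = (m : ZMod n) * u := hnbr x hxadj.symm hxmem
    -- repeated edge contradiction
    have hnodup := hc0.edges_nodup
    rw [hcons, SimpleGraph.Walk.edges_cons, hq, SimpleGraph.Walk.edges_concat,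
      List.nodup_cons] at hnodup
    apply hnodup.1
    rw [List.concat_eq_append]
    refine List.mem_append_right _ ?_
    rw [List.mem_singleton, he1, he2, Sym2.eq_swap]
end

section
/- Let n > 1, m > 1 be integers such that every prime factor of n divides m, let k = gcd(m, n), and write n = q·k. Then the m-graph of ℤ/nℤ has exactly q − 1 vertices of degree k + 1, and exactly n − q nonzero vertices of degree 1. -/
open Finset

theorem stmt_11 (n m q : ℕ) [NeZero n] (hn : 1 < n) (hm : 1 < m)
    (hp : ∀ p : ℕ, p.Prime → p ∣ n → p ∣ m)
    (hq : n = q * Nat.gcd m n) :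
    (Finset.univ.filter
        (fun a : ZMod n => (mGraph m (ZMod n)).degree a = Nat.gcd m n + 1)).card
      = q - 1 ∧
    (Finset.univ.filter
        (fun a : ZMod n => a ≠ 0 ∧ (mGraph m (ZMod n)).degree a = 1)).card
      = n - q := by
  set k := Nat.gcd m n with hk
  have hk0 : 0 < k := Nat.gcd_pos_of_pos_right m (by omega)
  have hq0 : 0 < q := by
    rcases Nat.eq_zero_or_pos q with h | h
    · subst h; simp at hq; omega
    · exact h
  -- coprimality facts
  have hc1 : Nat.Coprime (m - 1) n := by
    by_contra h
    obtain ⟨p, pp, h1, h2⟩ := Nat.Prime.not_coprime_iff_dvd.mp h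
    have hpm := hp p pp h2
    have : p ∣ m - (m - 1) := Nat.dvd_sub hpm h1
    simp [show m - (m - 1) = 1 by omega] at this
    exact pp.one_lt.ne' this
  have hc2 : Nat.Coprime (m + 1) n := by
    by_contra h
    obtain ⟨p, pp, h1, h2⟩ := Nat.Prime.not_coprime_iff_dvd.mp h
    have hpm := hp p pp h2
    have : p ∣ (m + 1) - m := Nat.dvd_sub h1 hpm
    simp at this
    exact pp.one_lt.ne' this
  -- Fact A: fixed points are 0
  have factA : ∀ a : ZMod n, (m : ZMod n) * a = a → a = 0 := by
    intro a h
    have hu : IsUnit ((m - 1 : ℕ) : ZMod n) := (ZMod.isUnit_iff_coprime _ n).mpr hc1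
    have h2 : ((m - 1 : ℕ) : ZMod n) * a = 0 := by
      push_cast [Nat.cast_sub (by omega : 1 ≤ m)]
      linear_combination h
    exact hu.mul_right_eq_zero.mp h2
  -- Fact B: 2-periodic points are 0
  have factB : ∀ a : ZMod n, (m : ZMod n) * ((m : ZMod n) * a) = a → a = 0 := by
    intro a h
    have hu : IsUnit (((m - 1) * (m + 1) : ℕ) : ZMod n) :=
      (ZMod.isUnit_iff_coprime _ n).mpr (Nat.Coprime.mul hc1 hc2)
    have h2 : (((m - 1) * (m + 1) : ℕ) : ZMod n) * a = 0 := by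
      push_cast [Nat.cast_sub (by omega : 1 ≤ m)]
      linear_combination h
    exact hu.mul_right_eq_zero.mp h2
  -- kernel characterization
  have hker : ∀ x : ZMod n, (m : ZMod n) * x = 0 ↔ q ∣ x.val := by
    intro x
    have h1 : (m : ZMod n) * x = ((m * x.val : ℕ) : ZMod n) := by
      push_cast [ZMod.natCast_zmod_val]; ring
    rw [h1, ZMod.natCast_eq_zero_iff]
    have hmk : k ∣ m := hk ▸ Nat.gcd_dvd_left m n
    have hnk : n / k = q := by rw [hq, Nat.mul_div_cancel _ hk0]
    have hcop : Nat.Coprime (m / k) q := by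
      have := Nat.coprime_div_gcd_div_gcd (m := m) (n := n) (hk ▸ hk0)
      rwa [← hk, hnk] at this
    constructor
    · intro h
      have h2 : k * q ∣ k * ((m / k) * x.val) := by
        rw [show k * ((m / k) * x.val) = (k * (m / k)) * x.val by ring,
          Nat.mul_div_cancel' hmk, mul_comm k q, ← hq]
        exact h
      exact hcop.symm.dvd_of_dvd_mul_left ((Nat.mul_dvd_mul_iff_left hk0).mp h2)
    · rintro ⟨c, hc⟩
      obtain ⟨m', hm'⟩ := hmk
      exact ⟨m' * c, by rw [hc, hm', hq]; ring⟩
  -- kernel cardinality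
  have hKcard : (univ.filter (fun x : ZMod n => (m : ZMod n) * x = 0)).card = k := by
    have : (univ.filter (fun x : ZMod n => (m : ZMod n) * x = 0))
        = (univ.filter (fun x : ZMod n => q ∣ x.val)) := by
      apply Finset.filter_congr; intro x _; simp [hker x]
    rw [this, ← Finset.card_range k]
    apply Finset.card_bij' (i := fun x _ => x.val / q) (j := fun j _ => ((q * j : ℕ) : ZMod n))
    · intro x hx
      simp only [mem_filter, mem_univ, true_and] at hx
      simp only [mem_range]
      have := ZMod.val_lt x
      exact Nat.div_lt_of_lt_mul (by omega)
    · intro j hj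
      simp only [mem_range] at hj
      simp only [mem_filter, mem_univ, true_and]
      rw [ZMod.val_cast_of_lt (by nlinarith)]
      exact Dvd.intro j rfl
    · intro x hx
      simp only [mem_filter, mem_univ, true_and] at hx
      rw [Nat.mul_div_cancel' hx, ZMod.natCast_zmod_val]
    · intro j hj
      simp only [mem_range] at hj
      rw [ZMod.val_cast_of_lt (by nlinarith), Nat.mul_div_cancel_left _ hq0]
  -- fiber cardinality
  have hfiber : ∀ a : ZMod n, (∃ b, (m : ZMod n) * b = a) →
      (univ.filter (fun b : ZMod n => (m : ZMod n) * b = a)).card = k := by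
    rintro a ⟨b₀, hb₀⟩
    rw [← hKcard]
    apply Finset.card_bij' (i := fun b _ => b - b₀) (j := fun x _ => b₀ + x)
    · intro b hb
      simp only [mem_filter, mem_univ, true_and] at hb ⊢
      rw [mul_sub, hb, hb₀, sub_self]
    · intro x hx
      simp only [mem_filter, mem_univ, true_and] at hx ⊢
      rw [mul_add, hx, hb₀, add_zero]
    · intro b _; ring
    · intro x _; ring
  -- image
  set I : Finset (ZMod n) := univ.image (fun b : ZMod n => (m : ZMod n) * b) with hI
  have hmemI : ∀ a : ZMod n, a ∈ I ↔ ∃ b, (m : ZMod n) * b = a := by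
    intro a; simp [hI]
  have h0I : (0 : ZMod n) ∈ I := (hmemI 0).mpr ⟨0, by ring⟩
  have hIcard : I.card = q := by
    have hpart : (univ : Finset (ZMod n)).card
        = ∑ a ∈ I, (univ.filter (fun b : ZMod n => (m : ZMod n) * b = a)).card := by
      apply Finset.card_eq_sum_card_fiberwise
      intro x _
      exact (hmemI _).mpr ⟨x, rfl⟩
    have hconst : ∑ a ∈ I, (univ.filter (fun b : ZMod n => (m : ZMod n) * b = a)).card
        = I.card * k := by
      rw [Finset.sum_congr rfl (fun a ha => hfiber a ((hmemI a).mp ha))]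
      simp [mul_comm]
    have hcardu : (univ : Finset (ZMod n)).card = n := by
      rw [Finset.card_univ, ZMod.card]
    have h5 : (univ : Finset (ZMod n)).card = I.card * k := hpart.trans hconst
    rw [hcardu] at h5
    exact (Nat.eq_of_mul_eq_mul_right hk0 (h5.symm.trans hq))
  -- degree rewriting
  have hsmul : ∀ a : ZMod n, m • a = (m : ZMod n) * a := fun a => nsmul_eq_mul m a
  have hdeg : ∀ a : ZMod n, (mGraph m (ZMod n)).degree a
      = (univ.filter (fun b => a ≠ b ∧ ((m : ZMod n) * a = b ∨ (m : ZMod n) * b = a))).card := by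
    intro a
    rw [SimpleGraph.degree, SimpleGraph.neighborFinset_eq_filter]
    congr 1
    apply Finset.filter_congr
    intro b _
    simp only [mGraph, hsmul]
  -- degree of nonzero image elements
  have hdegI : ∀ a : ZMod n, a ∈ I → a ≠ 0 → (mGraph m (ZMod n)).degree a = k + 1 := by
    intro a haI ha0
    rw [hdeg a]
    have hset : (univ.filter (fun b => a ≠ b ∧ ((m : ZMod n) * a = b ∨ (m : ZMod n) * b = a)))
        = insert ((m : ZMod n) * a) (univ.filter (fun b : ZMod n => (m : ZMod n) * b = a)) := by
      ext b
      simp only [mem_filter, mem_univ, true_and, mem_insert]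
      constructor
      · rintro ⟨hne, h | h⟩
        · exact Or.inl h.symm
        · exact Or.inr h
      · rintro (rfl | h)
        · refine ⟨fun h => ha0 (factA a h.symm ▸ (factA a h.symm)), Or.inl rfl⟩
        · refine ⟨fun hba => ha0 (factA a (hba ▸ h)), Or.inr h⟩
    rw [hset, Finset.card_insert_of_notMem, hfiber a ((hmemI a).mp haI)]
    simp only [mem_filter, mem_univ, true_and]
    intro hcon
    exact ha0 (factB a hcon)
  -- degree of zero
  have hdeg0 : (mGraph m (ZMod n)).degree 0 ≤ k - 1 := by
    rw [hdeg 0]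
    have hsub : (univ.filter (fun b => (0 : ZMod n) ≠ b ∧ ((m : ZMod n) * 0 = b ∨ (m : ZMod n) * b = 0)))
        ⊆ (univ.filter (fun x : ZMod n => (m : ZMod n) * x = 0)).erase 0 := by
      intro b hb
      simp only [mem_filter, mem_univ, true_and, mul_zero] at hb
      rcases hb with ⟨hne, h | h⟩
      · exact absurd h hne
      · exact Finset.mem_erase.mpr ⟨fun h0 => hne h0.symm, by simp [h]⟩
    calc _ ≤ ((univ.filter (fun x : ZMod n => (m : ZMod n) * x = 0)).erase 0).card :=
          Finset.card_le_card hsub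
      _ = k - 1 := by
          rw [Finset.card_erase_of_mem, hKcard]
          simp only [mem_filter, mem_univ, true_and, mul_zero]
  -- degree outside image
  have hdegOut : ∀ a : ZMod n, a ∉ I → a ≠ 0 ∧ (mGraph m (ZMod n)).degree a = 1 := by
    intro a haI
    have ha0 : a ≠ 0 := fun h => haI (h ▸ h0I)
    refine ⟨ha0, ?_⟩
    rw [hdeg a]
    have hset : (univ.filter (fun b => a ≠ b ∧ ((m : ZMod n) * a = b ∨ (m : ZMod n) * b = a)))
        = {(m : ZMod n) * a} := by
      ext b
      simp only [mem_filter, mem_univ, true_and, mem_singleton]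
      constructor
      · rintro ⟨hne, h | h⟩
        · exact h.symm
        · exact absurd ((hmemI a).mpr ⟨b, h⟩) haI
      · rintro rfl
        exact ⟨fun h => ha0 (factA a h.symm), Or.inl rfl⟩
    rw [hset, Finset.card_singleton]
  -- conclude
  constructor
  · have : (univ.filter
        (fun a : ZMod n => (mGraph m (ZMod n)).degree a = k + 1)) = I.erase 0 := by
      ext a
      simp only [mem_filter, mem_univ, true_and, Finset.mem_erase]
      constructor
      · intro hdega
        by_cases haI : a ∈ I
        · refine ⟨?_, haI⟩
          rintro rfl
          omega
        · have := (hdegOut a haI).2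
          omega
      · rintro ⟨ha0, haI⟩
        exact hdegI a haI ha0
    rw [this, Finset.card_erase_of_mem h0I, hIcard]
  · have : (univ.filter
        (fun a : ZMod n => a ≠ 0 ∧ (mGraph m (ZMod n)).degree a = 1)) = univ \ I := by
      ext a
      simp only [mem_filter, mem_univ, true_and, Finset.mem_sdiff]
      constructor
      · rintro ⟨ha0, hdega⟩
        intro haI
        have := hdegI a haI ha0
        omega
      · intro haI
        exact hdegOut a haI
    rw [this, Finset.card_sdiff_of_subset (Finset.subset_univ I), Finset.card_univ, ZMod.card, hIcard]
end

section
/- Let n ≥ 2, m > 1 be integers such that every prime factor of n divides m, and let k = gcd(m, n). Then the m-graph of ℤ/nℤ is isomorphic, as a graph, to the k-graph of ℤ/nℤ. -/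
theorem stmt_12 (n m : ℕ) (hn : 2 ≤ n) (hm : 1 < m)
    (hp : ∀ p : ℕ, p.Prime → p ∣ n → p ∣ m) :
    Nonempty (mGraph m (ZMod n) ≃g mGraph (Nat.gcd m n) (ZMod n)) := by
  have hn0 : n ≠ 0 := by omega
  haveI : NeZero n := ⟨hn0⟩
  set k := Nat.gcd m n with hkdef
  have hk0 : k ≠ 0 := Nat.gcd_ne_zero_right hn0
  have hkpos : 0 < k := Nat.pos_of_ne_zero hk0
  -- every prime of n divides k, hence n ∣ k ^ n
  have hnil : n ∣ k ^ n := by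
    rw [← Nat.factorization_le_iff_dvd hn0 (pow_ne_zero _ hk0)]
    intro p
    rcases Nat.eq_zero_or_pos (n.factorization p) with h0 | hpos
    · simp [h0]
    · have hmem : p ∈ n.primeFactors := by
        rw [← Nat.support_factorization]; exact Finsupp.mem_support_iff.mpr (by omega)
      have hpp : p.Prime := Nat.prime_of_mem_primeFactors hmem
      have hpn : p ∣ n := Nat.dvd_of_mem_primeFactors hmem
      have hpk : p ∣ k := Nat.dvd_gcd (hp p hpp hpn) hpn
      have h1 : 1 ≤ k.factorization p := (Nat.Prime.factorization_pos_of_dvd hpp hk0 hpk)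
      have h2 : n.factorization p < n := Nat.factorization_lt p hn0
      calc n.factorization p ≤ n * 1 := by omega
        _ ≤ n * k.factorization p := by exact Nat.mul_le_mul_left n h1
        _ = (k ^ n).factorization p := by simp [Nat.factorization_pow, mul_comm]
  -- a unit u with (m : ZMod n) = k * u
  have hkn : k ∣ n := Nat.gcd_dvd_right m n
  have hkm : k ∣ m := Nat.gcd_dvd_left m n
  set n' := n / k with hn'def
  set m' := m / k with hm'def
  have hkn' : k * n' = n := Nat.mul_div_cancel' hkn
  have hkm' : k * m' = m := Nat.mul_div_cancel' hkm
  have hcop : Nat.Coprime m' n' := Nat.coprime_div_gcd_div_gcd hkpos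
  have hn'n : n' ∣ n := Nat.div_dvd_of_dvd hkn
  obtain ⟨u, hu⟩ := ZMod.unitsMap_surjective hn'n (ZMod.unitOfCoprime m' hcop)
  have hval : (((u : ZMod n).val : ℕ) : ZMod n') = (m' : ZMod n') := by
    have := congrArg (fun w : (ZMod n')ˣ => (w : ZMod n')) hu
    simp only [ZMod.unitsMap_def, Units.coe_map, ZMod.coe_unitOfCoprime,
      MonoidHom.coe_coe, ZMod.castHom_apply] at this
    rw [ZMod.natCast_val]
    exact this
  have hmu : (m : ZMod n) = (k : ZMod n) * (u : ZMod n) := by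
    have h1 : (u : ZMod n).val ≡ m' [MOD n'] := (ZMod.natCast_eq_natCast_iff _ _ _).mp hval
    have h2 : k * (u : ZMod n).val ≡ k * m' [MOD k * n'] := h1.mul_left' k
    rw [hkn', hkm'] at h2
    have h3 : ((k * (u : ZMod n).val : ℕ) : ZMod n) = (m : ZMod n) :=
      (ZMod.natCast_eq_natCast_iff _ _ _).mpr h2
    rw [Nat.cast_mul, ZMod.natCast_val, ZMod.cast_id] at h3
    exact h3.symm
  -- nilpotency and depth function
  set K : ZMod n := (k : ZMod n) with hKdef
  have hKn : K ^ n = 0 := by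
    rw [hKdef, ← Nat.cast_pow]
    exact (ZMod.natCast_eq_zero_iff _ _).mpr hnil
  have hex : ∀ x : ZMod n, ∃ j, K ^ j * x = 0 := fun x => ⟨n, by rw [hKn, zero_mul]⟩
  set d : ZMod n → ℕ := fun x => Nat.find (hex x) with hddef
  have hd0 : ∀ x, K ^ (d x) * x = 0 := fun x => Nat.find_spec (hex x)
  have hdmin : ∀ x j, K ^ j * x = 0 → d x ≤ j := fun x j h => Nat.find_min' (hex x) h
  have hdu : ∀ (c : (ZMod n)ˣ) (x : ZMod n), d ((c : ZMod n) * x) = d x := by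
    intro c x
    have key : ∀ j (y : ZMod n), K ^ j * ((c : ZMod n) * y) = 0 ↔ K ^ j * y = 0 := by
      intro j y
      constructor
      · intro h
        have : (c : ZMod n) * (K ^ j * y) = 0 := by rw [← h]; ring
        exact (Units.mul_right_eq_zero c).mp this
      · intro h
        rw [show K ^ j * ((c : ZMod n) * y) = (c : ZMod n) * (K ^ j * y) by ring, h, mul_zero]
    exact le_antisymm (hdmin _ _ ((key _ _).mpr (hd0 x)))
      (hdmin _ _ ((key _ _).mp (hd0 _)))
  have hdz : ∀ x : ZMod n, d x = 0 ↔ x = 0 := by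
    intro x
    constructor
    · intro h; have := hd0 x; rw [h, pow_zero, one_mul] at this; exact this
    · intro h; exact Nat.le_zero.mp (hdmin x 0 (by rw [h, mul_zero]))
  have hdK : ∀ x : ZMod n, x ≠ 0 → d (K * x) = d x - 1 := by
    intro x hx
    have h1 : 1 ≤ d x := Nat.one_le_iff_ne_zero.mpr (fun h => hx ((hdz x).mp h))
    refine le_antisymm (hdmin _ _ ?_) ?_
    · rw [show K ^ (d x - 1) * (K * x) = K ^ (d x - 1) * K * x by ring, ← pow_succ,
        Nat.sub_add_cancel h1]
      exact hd0 x
    · have h2 : K ^ (d (K * x) + 1) * x = 0 := by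
        rw [pow_succ]
        rw [show K ^ (d (K * x)) * K * x = K ^ (d (K * x)) * (K * x) by ring]
        exact hd0 (K * x)
      have := hdmin x _ h2
      omega
  -- the conjugating bijection
  set σ : ZMod n → ZMod n := fun x => (u : ZMod n) ^ (d x) * x with hσdef
  set τ : ZMod n → ZMod n := fun y => ((u⁻¹ : (ZMod n)ˣ) : ZMod n) ^ (d y) * y with hτdef
  have hdσ : ∀ x, d (σ x) = d x := by
    intro x
    have : σ x = ((u ^ d x : (ZMod n)ˣ) : ZMod n) * x := by rw [Units.val_pow_eq_pow_val]
    rw [this, hdu]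
  have hdτ : ∀ y, d (τ y) = d y := by
    intro y
    have : τ y = ((u⁻¹ ^ d y : (ZMod n)ˣ) : ZMod n) * y := by rw [Units.val_pow_eq_pow_val]
    rw [this, hdu]
  have hlt : Function.LeftInverse τ σ := by
    intro x
    show ((u⁻¹ : (ZMod n)ˣ) : ZMod n) ^ (d (σ x)) * σ x = x
    rw [hdσ, hσdef]
    simp only [← mul_assoc, ← mul_pow]
    rw [show ((u⁻¹ : (ZMod n)ˣ) : ZMod n) * (u : ZMod n) = 1 by
      rw [← Units.val_mul, inv_mul_cancel, Units.val_one], one_pow, one_mul]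
  have hrt : Function.RightInverse τ σ := by
    intro y
    show (u : ZMod n) ^ (d (τ y)) * τ y = y
    rw [hdτ, hτdef]
    simp only [← mul_assoc, ← mul_pow]
    rw [show (u : ZMod n) * ((u⁻¹ : (ZMod n)ˣ) : ZMod n) = 1 by
      rw [← Units.val_mul, mul_inv_cancel, Units.val_one], one_pow, one_mul]
  have hinj : Function.Injective σ := hlt.injective
  -- conjugation identity
  have hcomm : ∀ x : ZMod n, σ ((m : ZMod n) * x) = K * σ x := by
    intro x
    by_cases hx : x = 0
    · simp [hσdef, hx]
    · have h1 : 1 ≤ d x := Nat.one_le_iff_ne_zero.mpr (fun h => hx ((hdz x).mp h))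
      have hd1 : d ((m : ZMod n) * x) = d x - 1 := by
        rw [hmu, show K * (u : ZMod n) * x = (u : ZMod n) * (K * x) by ring,
          hdu, hdK x hx]
      show (u : ZMod n) ^ (d ((m : ZMod n) * x)) * ((m : ZMod n) * x) = K * σ x
      rw [hd1, hmu]
      show (u : ZMod n) ^ (d x - 1) * (K * (u : ZMod n) * x)
        = K * ((u : ZMod n) ^ (d x) * x)
      have hpow : (u : ZMod n) ^ (d x) = (u : ZMod n) ^ (d x - 1) * (u : ZMod n) := by
        conv_lhs => rw [show d x = d x - 1 + 1 by omega]
        rw [pow_succ]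
      rw [hpow]; ring
  have hiff : ∀ a b : ZMod n, (m : ZMod n) * a = b ↔ K * σ a = σ b := by
    intro a b
    constructor
    · intro h; rw [← hcomm, h]
    · intro h; exact hinj (by rw [hcomm, h])
  -- assemble the isomorphism
  refine ⟨⟨Equiv.mk σ τ hlt hrt, ?_⟩⟩
  intro a b
  show (σ a ≠ σ b ∧ (k • σ a = σ b ∨ k • σ b = σ a)) ↔ (a ≠ b ∧ (m • a = b ∨ m • b = a))
  simp only [nsmul_eq_mul, ← hKdef]
  constructor
  · rintro ⟨hne, h | h⟩
    · exact ⟨fun h' => hne (by rw [h']), Or.inl ((hiff a b).mpr h)⟩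
    · exact ⟨fun h' => hne (by rw [h']), Or.inr ((hiff b a).mpr h)⟩
  · rintro ⟨hne, h | h⟩
    · exact ⟨fun h' => hne (hinj h'), Or.inl ((hiff a b).mp h)⟩
    · exact ⟨fun h' => hne (hinj h'), Or.inr ((hiff b a).mp h)⟩
end

section
/- Let n ≥ 2, m > 1 be integers such that every prime factor of n divides m, let k = gcd(m, n), and let w be the least positive integer with n dividing k^w. Then in the m-graph of ℤ/nℤ, the distance from 1 to 0 equals w, the distance from n−1 to 0 equals w, and for any nonzero a ∈ ℤ/nℤ with k ∤ a, the distance from a to 0 equals the least positive integer r such that n divides a·m^r; moreover the diameter of the m-graph is at most 2w. -/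
/-- Along any walk, `m^length * start` equals a power of `m` times the end. -/
lemma walk_pow_eq {n m : ℕ} [NeZero n] {a b : ZMod n}
    (p : (mGraph m (ZMod n)).Walk a b) :
    ∃ t : ℕ, (m : ZMod n) ^ p.length * a = (m : ZMod n) ^ t * b := by
  induction p with
  | nil => exact ⟨0, rfl⟩
  | cons h q ih =>
    rename_i u v b'
    obtain ⟨t, ht⟩ := ih
    rcases h.2 with h2 | h2
    · have hv : (m : ZMod n) * u = v := by simpa [nsmul_eq_mul] using h2
      refine ⟨t, ?_⟩
      rw [SimpleGraph.Walk.length_cons, pow_succ, mul_assoc, hv, ht]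
    · have hv : (m : ZMod n) * v = u := by simpa [nsmul_eq_mul] using h2
      refine ⟨t + 2, ?_⟩
      rw [SimpleGraph.Walk.length_cons, ← hv]
      calc (m : ZMod n) ^ (q.length + 1) * ((m : ZMod n) * v)
          = (m : ZMod n) ^ 2 * ((m : ZMod n) ^ q.length * v) := by ring
        _ = (m : ZMod n) ^ 2 * ((m : ZMod n) ^ t * b') := by rw [ht]
        _ = (m : ZMod n) ^ (t + 2) * b' := by ring

lemma walk_pow_eq_zero {n m : ℕ} [NeZero n] {a : ZMod n}
    (p : (mGraph m (ZMod n)).Walk a 0) : (m : ZMod n) ^ p.length * a = 0 := by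
  obtain ⟨t, ht⟩ := walk_pow_eq p
  rw [ht, mul_zero]

/-- If `m^r * a = 0` then there is a walk from `a` to `0` of length at most `r`. -/
lemma exists_walk_le {n m : ℕ} [NeZero n] :
    ∀ (r : ℕ) (a : ZMod n), (m : ZMod n) ^ r * a = 0 →
      ∃ p : (mGraph m (ZMod n)).Walk a 0, p.length ≤ r := by
  intro r
  induction r with
  | zero =>
    intro a ha
    simp only [pow_zero, one_mul] at ha
    subst ha
    exact ⟨SimpleGraph.Walk.nil, Nat.zero_le _⟩
  | succ s ih =>
    intro a ha
    by_cases h0 : a = 0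
    · subst h0; exact ⟨SimpleGraph.Walk.nil, Nat.zero_le _⟩
    · have hb : (m : ZMod n) ^ s * ((m : ZMod n) * a) = 0 := by
        rw [← mul_assoc, ← pow_succ]; exact ha
      obtain ⟨q, hq⟩ := ih ((m : ZMod n) * a) hb
      have hadj : (mGraph m (ZMod n)).Adj a ((m : ZMod n) * a) := by
        refine ⟨fun h => h0 ?_, Or.inl (by simp [nsmul_eq_mul])⟩
        -- from a = m * a deduce a = 0
        have : ∀ t : ℕ, (m : ZMod n) ^ t * a = a := by
          intro t
          induction t with
          | zero => simp
          | succ u ihu => rw [pow_succ, mul_comm ((m:ZMod n)^u), mul_assoc, ihu, ← h]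
        have := this (s + 1)
        rw [ha] at this
        exact this.symm
      exact ⟨SimpleGraph.Walk.cons hadj q, by simpa using Nat.succ_le_succ hq⟩

lemma dist_eq_min {n m : ℕ} [NeZero n] {a : ZMod n} {r : ℕ}
    (hr : (m : ZMod n) ^ r * a = 0)
    (hmin : ∀ s : ℕ, (m : ZMod n) ^ s * a = 0 → r ≤ s) :
    (mGraph m (ZMod n)).dist a 0 = r := by
  obtain ⟨p, hp⟩ := exists_walk_le r a hr
  have hreach : (mGraph m (ZMod n)).Reachable a 0 := ⟨p⟩
  obtain ⟨q, hq⟩ := hreach.exists_walk_length_eq_dist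
  refine le_antisymm ?_ ?_
  · exact le_trans (SimpleGraph.dist_le p) hp
  · rw [← hq]; exact hmin _ (walk_pow_eq_zero q)

theorem stmt_13 (n m w : ℕ) [NeZero n] (hn : 2 ≤ n) (hm : 1 < m)
    (hp : ∀ p : ℕ, p.Prime → p ∣ n → p ∣ m)
    (hw1 : 0 < w) (hw2 : n ∣ (Nat.gcd m n) ^ w)
    (hwleast : ∀ v : ℕ, 0 < v → n ∣ (Nat.gcd m n) ^ v → w ≤ v) :
    (mGraph m (ZMod n)).dist 1 0 = w ∧
    (mGraph m (ZMod n)).dist ((n : ZMod n) - 1) 0 = w ∧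
    (∀ a : ZMod n, a ≠ 0 → ¬ Nat.gcd m n ∣ a.val →
      ∀ r : ℕ, 0 < r → n ∣ a.val * m ^ r →
        (∀ s : ℕ, 0 < s → n ∣ a.val * m ^ s → r ≤ s) →
        (mGraph m (ZMod n)).dist a 0 = r) ∧
    (mGraph m (ZMod n)).diam ≤ 2 * w := by
  haveI : Fact (1 < n) := ⟨hn⟩
  -- n divides m^w
  have hnm : n ∣ m ^ w := hw2.trans (pow_dvd_pow_of_dvd (Nat.gcd_dvd_left m n) w)
  have hmw : (m : ZMod n) ^ w = 0 := by
    rw [← Nat.cast_pow]; exact (ZMod.natCast_eq_zero_iff _ n).mpr hnm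
  -- for s ≥ 1 : n ∣ m^s → n ∣ gcd(m,n)^s
  have key : ∀ s : ℕ, 0 < s → n ∣ m ^ s → n ∣ (Nat.gcd m n) ^ s := by
    intro s hs hdvd
    have hn0 : n ≠ 0 := NeZero.ne n
    have hm0 : m ≠ 0 := by omega
    have hk0 : Nat.gcd m n ≠ 0 := Nat.gcd_ne_zero_left hm0
    rw [← Nat.factorization_le_iff_dvd hn0 (pow_ne_zero s hm0)] at hdvd
    rw [← Nat.factorization_le_iff_dvd hn0 (pow_ne_zero s hk0)]
    rw [Nat.factorization_pow] at hdvd ⊢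
    rw [Nat.factorization_gcd hm0 hn0]
    rw [Finsupp.le_def] at hdvd ⊢
    intro p
    have h1 := hdvd p
    rw [Finsupp.smul_apply] at h1 ⊢
    rw [Finsupp.inf_apply]
    rcases le_total (m.factorization p) (n.factorization p) with hle | hle
    · rw [min_eq_left hle]; exact h1
    · rw [min_eq_right hle]
      calc n.factorization p = 1 * n.factorization p := (one_mul _).symm
        _ ≤ s * n.factorization p := Nat.mul_le_mul_right _ hs
        _ = s • n.factorization p := rfl
  -- minimality for a = 1 (and -1)
  have hmin1 : ∀ s : ℕ, (m : ZMod n) ^ s * (1 : ZMod n) = 0 → w ≤ s := by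
    intro s hs
    rw [mul_one, ← Nat.cast_pow, ZMod.natCast_eq_zero_iff] at hs
    rcases Nat.eq_zero_or_pos s with h0 | h0
    · subst h0; simp at hs; omega
    · exact hwleast s h0 (key s h0 hs)
  have d1 : (mGraph m (ZMod n)).dist 1 0 = w :=
    dist_eq_min (by rw [mul_one]; exact hmw) hmin1
  refine ⟨d1, ?_, ?_, ?_⟩
  · have : ((n : ZMod n) - 1) = (-1 : ZMod n) := by
      rw [ZMod.natCast_self]; ring
    rw [this]
    refine dist_eq_min (by rw [mul_neg_one, hmw, neg_zero]) ?_
    intro s hs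
    apply hmin1 s
    rw [mul_one]
    rwa [mul_neg_one, neg_eq_zero] at hs
  · intro a ha _hk r _hr hdvd hminr
    have conv : ∀ s : ℕ, ((m : ZMod n) ^ s * a = 0 ↔ n ∣ a.val * m ^ s) := by
      intro s
      rw [← ZMod.natCast_eq_zero_iff, Nat.cast_mul, Nat.cast_pow,
        ZMod.natCast_val, ZMod.cast_id, mul_comm]
    refine dist_eq_min ((conv r).mpr hdvd) ?_
    intro s hs
    rcases Nat.eq_zero_or_pos s with h0 | h0
    · subst h0; simp at hs; exact absurd hs ha
    · exact hminr s h0 ((conv s).mp hs)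
  · -- diameter bound
    have hall : ∀ u v : ZMod n, (mGraph m (ZMod n)).edist u v ≤ (2 * w : ℕ) := by
      intro u v
      obtain ⟨p, hpl⟩ := exists_walk_le (m := m) w u (by rw [hmw, zero_mul])
      obtain ⟨q, hql⟩ := exists_walk_le (m := m) w v (by rw [hmw, zero_mul])
      have := SimpleGraph.edist_le (p.append q.reverse)
      refine this.trans ?_
      rw [SimpleGraph.Walk.length_append, SimpleGraph.Walk.length_reverse]
      have : p.length + q.length ≤ 2 * w := by omega
      exact_mod_cast Nat.cast_le.mpr this
    have := SimpleGraph.ediam_le_of_edist_le hall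
    exact ENat.toNat_le_of_le_coe this
end

section
/- Let n = 2^w for some integer w ≥ 2 and let m > 1 be even with gcd(m, n) = 2. Then the diameter of the m-graph of ℤ/nℤ equals 2(w − 1). -/
section Aux

lemma walk_meet {m : ℕ} {H : Type*} [AddCommGroup H] {a b : H}
    (p : (mGraph m H).Walk a b) :
    ∃ i j : ℕ, i + j ≤ p.length ∧ m ^ i • a = m ^ j • b := by
  induction p with
  | nil => exact ⟨0, 0, le_rfl, rfl⟩
  | @cons a c b h q ih =>
    obtain ⟨i, j, hle, heq⟩ := ih
    rcases h.2 with h2 | h2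
    · refine ⟨i + 1, j, ?_, ?_⟩
      · simp only [SimpleGraph.Walk.length_cons]; omega
      · rw [pow_succ, mul_smul, h2, heq]
    · refine ⟨i, j + 1, ?_, ?_⟩
      · simp only [SimpleGraph.Walk.length_cons]; omega
      · calc m ^ i • a = m ^ i • (m • c) := by rw [h2]
          _ = m • (m ^ i • c) := by rw [smul_smul, smul_smul, mul_comm]
          _ = m • (m ^ j • b) := by rw [heq]
          _ = m ^ (j + 1) • b := by rw [smul_smul, ← pow_succ']

lemma mg_edist_smul_le {m : ℕ} {H : Type*} [AddCommGroup H] (x : H) :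
    (mGraph m H).edist x (m • x) ≤ 1 := by
  by_cases hx : m • x = x
  · rw [hx, SimpleGraph.edist_self]; exact zero_le
  · exact le_of_eq (SimpleGraph.edist_eq_one_iff_adj.mpr ⟨fun e => hx e.symm, Or.inl rfl⟩)

lemma edist_pow_smul_le {m : ℕ} {H : Type*} [AddCommGroup H] (x : H) (k : ℕ) :
    (mGraph m H).edist x (m ^ k • x) ≤ (k : ℕ∞) := by
  induction k with
  | zero => simp
  | succ k ih =>
    have h1 : m ^ (k + 1) • x = m • (m ^ k • x) := by rw [smul_smul, ← pow_succ']
    rw [h1]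
    calc (mGraph m H).edist x (m • (m ^ k • x))
        ≤ (mGraph m H).edist x (m ^ k • x)
          + (mGraph m H).edist (m ^ k • x) (m • (m ^ k • x)) :=
          SimpleGraph.edist_triangle
      _ ≤ (k : ℕ∞) + 1 := add_le_add ih (mg_edist_smul_le _)
      _ = ((k + 1 : ℕ) : ℕ∞) := by push_cast; ring

lemma two_pow_dvd_aux {w k : ℕ} {d : ℤ} (hd : Odd d)
    (h : (2 : ℤ) ^ w ∣ 2 ^ k * d) : w ≤ k := by
  by_contra hlt
  push_neg at hlt
  have h2 : (2 : ℤ) ^ (k + 1) ∣ 2 ^ k * d := dvd_trans (pow_dvd_pow 2 (by omega)) h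
  rw [pow_succ] at h2
  have h3 : (2 : ℤ) ∣ d :=
    (mul_dvd_mul_iff_left (a := (2 : ℤ) ^ k) (by positivity)).mp h2
  exact (Int.not_even_iff_odd.mpr hd) (even_iff_two_dvd.mpr h3)

lemma meet_bound {w i j u : ℕ} (hw : 2 ≤ w) (hu : Odd (u : ℤ))
    (h : (2 : ℤ) ^ w ∣ (2 * u) ^ j * 3 - (2 * u) ^ i) : 2 * (w - 1) ≤ i + j := by
  rcases lt_trichotomy i j with hij | rfl | hij
  · obtain ⟨t, rfl⟩ : ∃ t, j = i + t + 1 := ⟨j - i - 1, by omega⟩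
    have key : (2 * (u : ℤ)) ^ (i + t + 1) * 3 - (2 * u) ^ i
        = 2 ^ i * (3 * (2 ^ (t + 1) * u ^ (i + t + 1)) - u ^ i) := by ring
    rw [key] at h
    have hd : Odd ((3 : ℤ) * (2 ^ (t + 1) * (u : ℤ) ^ (i + t + 1)) - u ^ i) := by
      refine Even.sub_odd ?_ (hu.pow)
      refine Even.mul_left ?_ _
      exact (even_iff_two_dvd.mpr (dvd_pow_self 2 (Nat.succ_ne_zero t))).mul_right _
    have := two_pow_dvd_aux hd h
    omega
  · have key : (2 * (u : ℤ)) ^ i * 3 - (2 * u) ^ i = 2 ^ (i + 1) * u ^ i := by ring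
    rw [key] at h
    have := two_pow_dvd_aux (hu.pow) h
    omega
  · obtain ⟨t, rfl⟩ : ∃ t, i = j + t + 1 := ⟨i - j - 1, by omega⟩
    have key : (2 * (u : ℤ)) ^ j * 3 - (2 * u) ^ (j + t + 1)
        = 2 ^ j * (3 * u ^ j - 2 ^ (t + 1) * u ^ (j + t + 1)) := by ring
    rw [key] at h
    have hd : Odd ((3 : ℤ) * (u : ℤ) ^ j - 2 ^ (t + 1) * u ^ (j + t + 1)) := by
      refine Odd.sub_even (Odd.mul (by decide) hu.pow) ?_
      exact (even_iff_two_dvd.mpr (dvd_pow_self 2 (Nat.succ_ne_zero t))).mul_right _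
    have := two_pow_dvd_aux hd h
    omega

end Aux

theorem stmt_14 (n m w : ℕ) (hw : 2 ≤ w) (hn : n = 2 ^ w)
    (hm : 1 < m) (hme : 2 ∣ m) (hk : Nat.gcd m n = 2) :
    (mGraph m (ZMod n)).diam = 2 * (w - 1) := by
  subst hn
  haveI : NeZero (2 ^ w) := ⟨by positivity⟩
  obtain ⟨u, hmu⟩ := hme
  have hu : Odd u := by
    rcases Nat.even_or_odd u with ⟨t, ht⟩ | ho
    · exfalso
      have h4m : 4 ∣ m := ⟨t, by omega⟩
      have h4n : 4 ∣ 2 ^ w := by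
        have : (2 : ℕ) ^ 2 ∣ 2 ^ w := pow_dvd_pow 2 hw
        simpa using this
      have : 4 ∣ Nat.gcd m (2 ^ w) := Nat.dvd_gcd h4m h4n
      omega
    · exact ho
  set G := mGraph m (ZMod (2 ^ w)) with hG
  set c : ZMod (2 ^ w) := ((2 ^ (w - 1) : ℕ) : ZMod (2 ^ w)) with hc
  have hw1 : w - 1 + 1 = w := by omega
  -- c ≠ 0
  have hpow2 : (2 : ℕ) ^ w = 2 ^ (w - 1) * 2 := by rw [← pow_succ, hw1]
  have hc0 : c ≠ 0 := by
    rw [hc, Ne, ZMod.natCast_eq_zero_iff]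
    intro hdvd
    have h1 : (2 : ℕ) ^ w ≤ 2 ^ (w - 1) := Nat.le_of_dvd (by positivity) hdvd
    have h2 : (0 : ℕ) < 2 ^ (w - 1) := by positivity
    omega
  -- m • c = 0
  have hmc : m • c = 0 := by
    rw [hc, nsmul_eq_mul, ← Nat.cast_mul, ZMod.natCast_eq_zero_iff]
    exact ⟨u, by rw [hmu, hpow2]; ring⟩
  have hadj : G.Adj c 0 := ⟨hc0, Or.inl hmc⟩
  -- multiplication by c sends everything to 0 or c
  have key : ∀ x : ZMod (2 ^ w), c * x = 0 ∨ c * x = c := by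
    intro x
    have hx : x = ((x.val : ℕ) : ZMod (2 ^ w)) := (ZMod.natCast_zmod_val x).symm
    rcases Nat.even_or_odd x.val with ⟨t, ht⟩ | ⟨t, ht⟩
    · left
      rw [hx, hc, ← Nat.cast_mul, ZMod.natCast_eq_zero_iff]
      exact ⟨t, by rw [ht, hpow2]; ring⟩
    · right
      rw [hx, hc, ← Nat.cast_mul, ZMod.natCast_eq_natCast_iff]
      have hle : 2 ^ (w - 1) ≤ 2 ^ (w - 1) * x.val := Nat.le_mul_of_pos_right _ (by omega)
      refine ((Nat.modEq_iff_dvd' hle).mpr ⟨t, ?_⟩).symm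
      rw [ht, hpow2]
      apply Nat.sub_eq_of_eq_add
      ring
  -- m^(w-1) • x ∈ {0, c}
  have hpow : ∀ x : ZMod (2 ^ w), m ^ (w - 1) • x = 0 ∨ m ^ (w - 1) • x = c := by
    intro x
    have heq : m ^ (w - 1) • x = c * (((u ^ (w - 1) : ℕ) : ZMod (2 ^ w)) * x) := by
      rw [nsmul_eq_mul, hmu, hc]
      push_cast
      ring
    rw [heq]
    exact key _
  -- kernel of multiplication by m
  have hker : ∀ z : ZMod (2 ^ w), m • z = 0 → z = 0 ∨ z = c := by
    intro z hz
    have h2u : ¬ 2 ∣ u := by obtain ⟨t, ht⟩ := hu; omega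
    have hUnit : IsUnit ((u : ℕ) : ZMod (2 ^ w)) := by
      rw [ZMod.isUnit_iff_coprime]
      exact Nat.Coprime.pow_right w
        (Nat.coprime_comm.mp ((Nat.Prime.coprime_iff_not_dvd Nat.prime_two).mpr h2u))
    have h2z : ((2 : ℕ) : ZMod (2 ^ w)) * z = 0 := by
      rw [nsmul_eq_mul, hmu] at hz
      push_cast at hz ⊢
      have : ((u : ZMod (2 ^ w))) * (2 * z) = 0 := by rw [← hz]; ring
      exact (hUnit.mul_right_eq_zero).mp (by push_cast at this ⊢; exact this)
    have hdvd : 2 ^ w ∣ 2 * z.val := by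
      rw [← ZMod.natCast_eq_zero_iff]
      push_cast
      rw [ZMod.natCast_zmod_val]
      exact_mod_cast h2z
    have hdvd' : 2 ^ (w - 1) ∣ z.val := by
      have h2 : 2 * 2 ^ (w - 1) ∣ 2 * z.val := by
        rw [show 2 * 2 ^ (w - 1) = 2 ^ w by rw [hpow2]; ring]; exact hdvd
      exact (Nat.mul_dvd_mul_iff_left (by norm_num : 0 < 2)).mp h2
    obtain ⟨t, ht⟩ := hdvd'
    have hlt : z.val < 2 ^ w := z.val_lt
    have h2w : 2 ^ w = 2 ^ (w - 1) * 2 := hpow2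
    have htlt : t < 2 := by
      by_contra hge
      push_neg at hge
      have : 2 ^ (w - 1) * 2 ≤ 2 ^ (w - 1) * t := Nat.mul_le_mul_left _ hge
      omega
    interval_cases t
    · left
      have : z.val = 0 := by omega
      rw [← ZMod.natCast_zmod_val z, this, Nat.cast_zero]
    · right
      rw [← ZMod.natCast_zmod_val z, ht, hc, mul_one]
  -- upper bound: everything is within w-1 of c
  have upper : ∀ x : ZMod (2 ^ w), G.edist x c ≤ ((w - 1 : ℕ) : ℕ∞) := by
    intro x
    rcases hpow x with h0 | hcx
    · have hsplit : m • (m ^ (w - 2) • x) = m ^ (w - 1) • x := by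
        rw [smul_smul, ← pow_succ', show w - 2 + 1 = w - 1 by omega]
      have hz := hker (m ^ (w - 2) • x) (by rw [hsplit, h0])
      rcases hz with hz | hz
      · calc G.edist x c
            ≤ G.edist x (m ^ (w - 2) • x) + G.edist (m ^ (w - 2) • x) c :=
              SimpleGraph.edist_triangle
          _ ≤ ((w - 2 : ℕ) : ℕ∞) + 1 := by
              refine add_le_add (edist_pow_smul_le x (w - 2)) ?_
              rw [hz, SimpleGraph.edist_comm]
              exact le_of_eq (SimpleGraph.edist_eq_one_iff_adj.mpr hadj)
          _ = ((w - 1 : ℕ) : ℕ∞) := by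
              rw [← Nat.cast_one (R := ℕ∞), ← Nat.cast_add]
              exact congrArg _ (by omega)
      · calc G.edist x c ≤ ((w - 2 : ℕ) : ℕ∞) := by rw [← hz]; exact edist_pow_smul_le x (w - 2)
          _ ≤ ((w - 1 : ℕ) : ℕ∞) := Nat.cast_le.mpr (by omega)
    · rw [← hcx]
      exact edist_pow_smul_le x (w - 1)
  have hub : ∀ a b : ZMod (2 ^ w), G.edist a b ≤ ((2 * (w - 1) : ℕ) : ℕ∞) := by
    intro a b
    calc G.edist a b ≤ G.edist a c + G.edist c b := SimpleGraph.edist_triangle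
      _ ≤ ((w - 1 : ℕ) : ℕ∞) + ((w - 1 : ℕ) : ℕ∞) := by
          refine add_le_add (upper a) ?_
          rw [SimpleGraph.edist_comm]; exact upper b
      _ = ((2 * (w - 1) : ℕ) : ℕ∞) := by push_cast; ring
  have hediam_le : G.ediam ≤ ((2 * (w - 1) : ℕ) : ℕ∞) :=
    SimpleGraph.ediam_le_of_edist_le fun a b => hub a b
  -- lower bound: edist 1 3 ≥ 2(w-1)
  have hreach : G.Reachable (1 : ZMod (2 ^ w)) 3 := by
    apply SimpleGraph.reachable_of_edist_ne_top
    intro htop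
    have h := hub (1 : ZMod (2 ^ w)) 3
    rw [htop] at h
    exact ENat.coe_ne_top _ (top_le_iff.mp h)
  obtain ⟨p, hp⟩ := hreach.exists_walk_length_eq_edist
  obtain ⟨i, j, hij, heq⟩ := walk_meet p
  have h1 : m ^ i • (1 : ZMod (2 ^ w)) = ((m ^ i : ℕ) : ZMod (2 ^ w)) := by
    rw [nsmul_eq_mul, mul_one]
  have h3 : m ^ j • (3 : ZMod (2 ^ w)) = ((m ^ j * 3 : ℕ) : ZMod (2 ^ w)) := by
    rw [nsmul_eq_mul]; push_cast; ring
  rw [h1, h3] at heq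
  have hmod : (m ^ i) ≡ (m ^ j * 3) [MOD 2 ^ w] := (ZMod.natCast_eq_natCast_iff _ _ _).mp heq
  have hdvdZ : ((2 ^ w : ℕ) : ℤ) ∣ ((m ^ j * 3 : ℕ) : ℤ) - ((m ^ i : ℕ) : ℤ) := hmod.dvd
  have hdvdZ' : (2 : ℤ) ^ w ∣ (2 * (u : ℤ)) ^ j * 3 - (2 * u) ^ i := by
    push_cast at hdvdZ
    rw [hmu] at hdvdZ
    push_cast at hdvdZ
    convert hdvdZ using 2
  have huZ : Odd ((u : ℤ)) := by obtain ⟨t, ht⟩ := hu; exact ⟨t, by exact_mod_cast ht⟩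
  have hlow : 2 * (w - 1) ≤ i + j := meet_bound hw huZ hdvdZ'
  have hlen : 2 * (w - 1) ≤ p.length := le_trans hlow hij
  have hedist_ge : ((2 * (w - 1) : ℕ) : ℕ∞) ≤ G.edist 1 3 := by
    rw [← hp]
    exact Nat.cast_le.mpr hlen
  have hediam_ge : ((2 * (w - 1) : ℕ) : ℕ∞) ≤ G.ediam :=
    le_trans hedist_ge SimpleGraph.edist_le_ediam
  have hediam : G.ediam = ((2 * (w - 1) : ℕ) : ℕ∞) := le_antisymm hediam_le hediam_ge
  show G.ediam.toNat = 2 * (w - 1)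
  rw [hediam]
  exact ENat.toNat_coe _
end

section
/- Let k > 2 and n = k^w for some integer w ≥ 1, and suppose every prime factor of n divides k. Then the diameter of the k-graph of ℤ/nℤ equals 2w. -/
/-- From any vertex, going "up" s times reaches `k^s • a` with edist ≤ s. -/
lemma edist_up (k : ℕ) {H : Type*} [AddCommGroup H] (s : ℕ) (a : H) :
    (mGraph k H).edist a ((k ^ s) • a) ≤ s := by
  induction s with
  | zero => simp [pow_zero, one_smul]
  | succ s ih =>
    have hrw : (k ^ (s+1)) • a = k • ((k ^ s) • a) := by
      rw [← mul_smul, ← pow_succ']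
    rw [hrw]
    refine le_trans (SimpleGraph.edist_triangle (v := (k ^ s) • a)) ?_
    have hstep : (mGraph k H).edist ((k ^ s) • a) (k • ((k ^ s) • a)) ≤ 1 := by
      by_cases h : (k ^ s) • a = k • ((k ^ s) • a)
      · rw [← h, SimpleGraph.edist_self]; exact zero_le_one
      · have : (mGraph k H).Adj ((k ^ s) • a) (k • ((k ^ s) • a)) := ⟨h, Or.inl rfl⟩
        exact le_of_eq (SimpleGraph.edist_eq_one_iff_adj.mpr this)
    calc (mGraph k H).edist a ((k ^ s) • a) + _ ≤ (s : ℕ∞) + 1 := add_le_add ih hstep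
      _ = ((s + 1 : ℕ) : ℕ∞) := by push_cast; ring

/-- Any walk yields an equation `k^s • a = k^t • b` with `s + t ≤ length`. -/
lemma walk_eq (k : ℕ) {H : Type*} [AddCommGroup H] :
    ∀ {a b : H} (p : (mGraph k H).Walk a b),
      ∃ s t : ℕ, s + t ≤ p.length ∧ (k ^ s) • a = (k ^ t) • b := by
  intro a b p
  induction p with
  | nil => exact ⟨0, 0, by simp, rfl⟩
  | @cons u v b h p ih =>
    obtain ⟨s, t, hst, heq⟩ := ih
    rcases h.2 with h1 | h2
    · -- k • u = v
      refine ⟨s + 1, t, by rw [SimpleGraph.Walk.length_cons]; omega, ?_⟩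
      rw [pow_succ, mul_smul, h1]; exact heq
    · -- k • v = u
      rcases Nat.eq_zero_or_pos s with hs | hs
      · subst hs
        refine ⟨0, t + 1, by rw [SimpleGraph.Walk.length_cons]; omega, ?_⟩
        simp only [pow_zero, one_smul] at heq
        rw [pow_zero, one_smul, pow_succ', mul_smul, ← heq, h2]
      · obtain ⟨s', rfl⟩ := Nat.exists_eq_add_of_le hs
        refine ⟨s', t, by rw [SimpleGraph.Walk.length_cons]; omega, ?_⟩
        rw [← h2, ← mul_smul, ← pow_succ]
        rwa [Nat.add_comm 1 s'] at heq

theorem stmt_15 (n k w : ℕ) (hk : 2 < k) (hw : 1 ≤ w) (hn : n = k ^ w)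
    (hp : ∀ p : ℕ, p.Prime → p ∣ n → p ∣ k) :
    (mGraph k (ZMod n)).diam = 2 * w := by
  have hk0 : 0 < k := by omega
  have hn0 : 0 < n := by rw [hn]; positivity
  haveI : NeZero n := ⟨hn0.ne'⟩
  set G := mGraph k (ZMod n) with hG
  -- every vertex satisfies k^w • a = 0
  have hzero : ∀ a : ZMod n, (k ^ w) • a = 0 := by
    intro a
    have : ((k ^ w : ℕ) : ZMod n) = 0 := by
      rw [← hn]; exact ZMod.natCast_self n
    rw [nsmul_eq_mul, this, zero_mul]
  -- upper bound on edist
  have hedist : ∀ u v : ZMod n, G.edist u v ≤ (2 * w : ℕ) := by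
    intro u v
    have h1 : G.edist u 0 ≤ (w : ℕ∞) := by
      have := edist_up k w u; rwa [hzero u] at this
    have h2 : G.edist 0 v ≤ (w : ℕ∞) := by
      have := edist_up k w v; rw [hzero v] at this
      rwa [SimpleGraph.edist_comm] at this
    refine le_trans (SimpleGraph.edist_triangle (v := 0)) ?_
    calc G.edist u 0 + G.edist 0 v ≤ (w : ℕ∞) + (w : ℕ∞) := add_le_add h1 h2
      _ = ((2 * w : ℕ) : ℕ∞) := by push_cast; ring
  have hediam : G.ediam ≤ (2 * w : ℕ) :=
    SimpleGraph.ediam_le_of_edist_le hedist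
  have hne : G.ediam ≠ ⊤ := by
    intro h; rw [h] at hediam
    exact (ENat.coe_ne_top (2*w)) (top_le_iff.mp hediam)
  -- number theory: k^w ∣ k^s + k^t → w ≤ s and w ≤ t
  have key : ∀ s t : ℕ, s ≤ t → k ^ w ∣ k ^ s + k ^ t → w ≤ s := by
    intro s t hst hdvd
    by_contra hns
    push_neg at hns
    have hfac : k ^ s + k ^ t = k ^ s * (1 + k ^ (t - s)) := by
      rw [mul_add, mul_one, ← pow_add, Nat.add_sub_cancel' hst]
    have hdvd2 : k ^ s * k ∣ k ^ s * (1 + k ^ (t - s)) := by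
      rw [← hfac]
      exact dvd_trans (by rw [← pow_succ]; exact pow_dvd_pow k (by omega)) hdvd
    have hkdvd : k ∣ 1 + k ^ (t - s) :=
      (mul_dvd_mul_iff_left (a := k ^ s) (pow_pos hk0 s).ne').mp hdvd2
    rcases Nat.eq_or_lt_of_le hst with rfl | hlt
    · simp only [Nat.sub_self, pow_zero] at hkdvd
      have := Nat.le_of_dvd (by norm_num) hkdvd
      omega
    · have h1 : k ∣ k ^ (t - s) := dvd_pow_self k (by omega)
      have : k ∣ 1 := (Nat.dvd_add_right h1).mp (by rwa [Nat.add_comm] at hkdvd)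
      have := Nat.le_of_dvd one_pos this
      omega
  -- lower bound: dist 1 (-1) ≥ 2w
  have hreach : G.Reachable (1 : ZMod n) (-1) :=
    SimpleGraph.reachable_of_edist_ne_top (by
      intro h
      have h2 := hedist 1 (-1)
      rw [h] at h2
      exact (ENat.coe_ne_top (2*w)) (top_le_iff.mp h2))
  obtain ⟨p, hp_len⟩ := hreach.exists_walk_length_eq_dist
  obtain ⟨s, t, hst, heq⟩ := walk_eq k p
  have hdvd : n ∣ k ^ s + k ^ t := by
    rw [nsmul_eq_mul, nsmul_eq_mul, mul_one, mul_neg, mul_one] at heq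
    have : ((k ^ s + k ^ t : ℕ) : ZMod n) = 0 := by
      push_cast at heq ⊢
      rw [heq]; ring
    exact (ZMod.natCast_eq_zero_iff _ n).mp this
  rw [hn] at hdvd
  have hsw : w ≤ s ∧ w ≤ t := by
    rcases le_total s t with h | h
    · have := key s t h hdvd
      exact ⟨this, le_trans this h⟩
    · have := key t s h (by rwa [Nat.add_comm] at hdvd)
      exact ⟨le_trans this h, this⟩
  have hdist_lb : 2 * w ≤ G.dist 1 (-1) := by
    rw [← hp_len]; omega
  -- combine
  have hub : G.diam ≤ 2 * w := by
    have : G.ediam.toNat ≤ ((2 * w : ℕ) : ℕ∞).toNat :=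
      ENat.toNat_le_toNat hediam (ENat.coe_ne_top _)
    simpa [SimpleGraph.diam] using this
  have hlb : 2 * w ≤ G.diam :=
    le_trans hdist_lb (SimpleGraph.dist_le_diam hne)
  omega
end

section
/- Let n be an odd integer > 1, k > 1 an integer dividing n such that every prime factor of n divides k, and let w be the least positive integer with n dividing k^w. Then the diameter of the k-graph of ℤ/nℤ equals 2w. -/
lemma mGraph_smul_eq {n k : ℕ} (a : ZMod n) : k • a = (k : ZMod n) * a := by
  simp [nsmul_eq_mul]

lemma walk_invariant {n k : ℕ} {a b : ZMod n} (p : (mGraph k (ZMod n)).Walk a b) :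
    ∃ i j : ℕ, i + j = p.length ∧ (k : ZMod n) ^ i * a = (k : ZMod n) ^ j * b := by
  induction p with
  | nil => exact ⟨0, 0, rfl, rfl⟩
  | @cons a c b h p ih =>
    obtain ⟨i, j, hij, he⟩ := ih
    rcases h.2 with h1 | h1
    · rw [mGraph_smul_eq] at h1
      refine ⟨i + 1, j, by simp [← hij]; ring, ?_⟩
      rw [pow_succ, mul_assoc, h1, he]
    · rw [mGraph_smul_eq] at h1
      refine ⟨i, j + 1, by simp [← hij]; ring, ?_⟩
      rw [← h1]
      calc (k:ZMod n)^i * ((k:ZMod n) * c)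
          = (k:ZMod n) * ((k:ZMod n)^i * c) := by ring
        _ = (k:ZMod n) * ((k:ZMod n)^j * b) := by rw [he]
        _ = (k:ZMod n)^(j+1) * b := by ring

lemma edist_pow_le {n k : ℕ} (a : ZMod n) (j : ℕ) :
    (mGraph k (ZMod n)).edist a ((k : ZMod n) ^ j * a) ≤ j := by
  induction j with
  | zero => simp
  | succ j ih =>
    have step : (mGraph k (ZMod n)).edist ((k:ZMod n)^j * a) ((k:ZMod n)^(j+1) * a) ≤ 1 := by
      by_cases h : (k:ZMod n)^j * a = (k:ZMod n)^(j+1) * a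
      · rw [h]; simp
      · have hadj : (mGraph k (ZMod n)).Adj ((k:ZMod n)^j * a) ((k:ZMod n)^(j+1) * a) := by
          refine ⟨h, Or.inl ?_⟩
          rw [mGraph_smul_eq, pow_succ]; ring
        have := SimpleGraph.edist_le (SimpleGraph.Walk.cons hadj SimpleGraph.Walk.nil)
        simpa using this
    calc (mGraph k (ZMod n)).edist a ((k:ZMod n)^(j+1) * a)
        ≤ (mGraph k (ZMod n)).edist a ((k:ZMod n)^j * a)
          + (mGraph k (ZMod n)).edist ((k:ZMod n)^j * a) ((k:ZMod n)^(j+1) * a) :=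
          SimpleGraph.edist_triangle
      _ ≤ (j : ℕ∞) + 1 := add_le_add ih step
      _ = ((j+1 : ℕ) : ℕ∞) := by push_cast; ring

theorem stmt_16 (n k w : ℕ) (hn : 1 < n) (hodd : Odd n)
    (hk : 1 < k) (hkn : k ∣ n)
    (hp : ∀ p : ℕ, p.Prime → p ∣ n → p ∣ k)
    (hw1 : 0 < w) (hw2 : n ∣ k ^ w)
    (hwleast : ∀ v : ℕ, 0 < v → n ∣ k ^ v → w ≤ v) :
    (mGraph k (ZMod n)).diam = 2 * w := by
  haveI : NeZero n := ⟨by omega⟩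
  set G := mGraph k (ZMod n) with hG
  -- (k : ZMod n) ^ w = 0
  have hkw0 : (k : ZMod n) ^ w = 0 := by
    rw [← Nat.cast_pow]
    exact (ZMod.natCast_eq_zero_iff _ _).mpr hw2
  -- key number theory: if n ∣ k^i + k^j with i ≤ j then w ≤ i
  have key : ∀ i j : ℕ, i ≤ j → n ∣ k ^ i + k ^ j → w ≤ i := by
    intro i j hij hd
    have hfac : k ^ i + k ^ j = k ^ i * (1 + k ^ (j - i)) := by
      rw [Nat.mul_add, Nat.mul_one, ← pow_add]
      congr 2
      omega
    rw [hfac] at hd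
    have hcop : Nat.Coprime n (1 + k ^ (j - i)) := by
      by_contra hnc
      obtain ⟨p, hp', hpd⟩ := (Nat.gcd n (1 + k ^ (j-i))).exists_prime_and_dvd (by
        simpa [Nat.Coprime] using hnc)
      have hpn : p ∣ n := hpd.trans (Nat.gcd_dvd_left _ _)
      have hpm : p ∣ 1 + k ^ (j - i) := hpd.trans (Nat.gcd_dvd_right _ _)
      have hpk : p ∣ k := hp p hp' hpn
      rcases Nat.eq_zero_or_pos (j - i) with h0 | h0
      · -- 1 + k^0 = 2, contradiction with n odd
        rw [h0, pow_zero] at hpm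
        have hp2 : p = 2 := by
          have h1 := Nat.le_of_dvd (by norm_num) hpm
          have h2 := hp'.two_le
          omega
        subst hp2
        obtain ⟨c, hc⟩ := hpn
        have := Nat.odd_iff.mp hodd
        omega
      · have : p ∣ k ^ (j - i) := dvd_pow hpk (by omega)
        have : p ∣ 1 := (Nat.dvd_add_right this).mp (by rwa [Nat.add_comm] at hpm)
        exact Nat.Prime.one_lt hp' |>.ne' (Nat.dvd_one.mp this)
    have hni : n ∣ k ^ i := (Nat.Coprime.dvd_of_dvd_mul_right hcop hd)
    rcases Nat.eq_zero_or_pos i with h0 | h0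
    · rw [h0, pow_zero] at hni
      have := Nat.le_of_dvd one_pos hni
      omega
    · exact hwleast i h0 hni
  -- upper bound
  have hub : G.ediam ≤ (2 * w : ℕ) := by
    apply SimpleGraph.ediam_le_of_edist_le
    intro u v
    have h1 : G.edist u 0 ≤ w := by
      have := edist_pow_le (n := n) (k := k) u w
      rwa [hkw0, zero_mul] at this
    have h2 : G.edist 0 v ≤ w := by
      rw [SimpleGraph.edist_comm]
      have := edist_pow_le (n := n) (k := k) v w
      rwa [hkw0, zero_mul] at this
    calc G.edist u v ≤ G.edist u 0 + G.edist 0 v := SimpleGraph.edist_triangle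
      _ ≤ (w : ℕ∞) + w := add_le_add h1 h2
      _ = ((2 * w : ℕ) : ℕ∞) := by push_cast; ring
  -- lower bound: edist 1 (-1) ≥ 2w
  have hlb : ((2 * w : ℕ) : ℕ∞) ≤ G.edist (1 : ZMod n) (-1) := by
    apply le_iInf
    intro p
    obtain ⟨i, j, hij, he⟩ := walk_invariant p
    rw [mul_one] at he
    have hsum : ((k : ZMod n)) ^ i + (k : ZMod n) ^ j = 0 := by
      rw [he]; ring
    have hdvd : n ∣ k ^ i + k ^ j := by
      have : ((k ^ i + k ^ j : ℕ) : ZMod n) = 0 := by push_cast; exact hsum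
      exact (ZMod.natCast_eq_zero_iff _ _).mp this
    have h2w : 2 * w ≤ i + j := by
      rcases le_total i j with hle | hle
      · have := key i j hle hdvd
        omega
      · have := key j i hle (by rwa [Nat.add_comm] at hdvd)
        omega
    calc ((2 * w : ℕ) : ℕ∞) ≤ ((i + j : ℕ) : ℕ∞) := by exact_mod_cast h2w
      _ = (p.length : ℕ∞) := by rw [hij]
  have hediam : G.ediam = ((2 * w : ℕ) : ℕ∞) :=
    le_antisymm hub (hlb.trans SimpleGraph.edist_le_ediam)
  rw [SimpleGraph.diam, hediam, ENat.toNat_coe]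
end

section
/- For every integer d ≥ 1 there exist an integer m > 1 and a positive integer n such that the m-graph of ℤ/nℤ is connected and has diameter exactly d. -/
namespace Stmt18Aux

variable {d : ℕ}

instance : NeZero (2 ^ d) := ⟨pow_ne_zero d two_ne_zero⟩

local notation "G" => mGraph 4 (ZMod (2 ^ d))

lemma cast_val (x : ZMod (2 ^ d)) : ((x.val : ℕ) : ZMod (2 ^ d)) = x :=
  ZMod.natCast_rightInverse x

lemma adj_of (x : ZMod (2 ^ d)) (h : (4 : ZMod (2 ^ d)) * x ≠ x) :
    (mGraph 4 (ZMod (2 ^ d))).Adj x (4 * x) := by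
  refine (show _ ∧ _ from ⟨fun he => h he.symm, Or.inl ?_⟩)
  rw [nsmul_eq_mul]
  norm_num

lemma edist_le_pow (j : ℕ) (x : ZMod (2 ^ d)) :
    (mGraph 4 (ZMod (2 ^ d))).edist x ((4 : ZMod (2 ^ d)) ^ j * x) ≤ j := by
  induction j generalizing x with
  | zero => simp
  | succ j ih =>
    have key : (4 : ZMod (2 ^ d)) ^ (j + 1) * x = (4 : ZMod (2 ^ d)) ^ j * (4 * x) := by ring
    have h1 : (mGraph 4 (ZMod (2 ^ d))).edist x (4 * x) ≤ 1 := by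
      rcases eq_or_ne ((4 : ZMod (2 ^ d)) * x) x with h | h
      · rw [h]; simp
      · exact le_of_eq (SimpleGraph.edist_eq_one_iff_adj.mpr (adj_of x h))
    calc (mGraph 4 (ZMod (2 ^ d))).edist x ((4 : ZMod (2 ^ d)) ^ (j + 1) * x)
        ≤ (mGraph 4 (ZMod (2 ^ d))).edist x (4 * x)
          + (mGraph 4 (ZMod (2 ^ d))).edist (4 * x) ((4 : ZMod (2 ^ d)) ^ (j + 1) * x) :=
          SimpleGraph.edist_triangle
      _ ≤ 1 + j := by
          rw [key]
          exact add_le_add h1 (ih (4 * x))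
      _ = (j + 1 : ℕ) := by push_cast; ring

lemma edist_le_of_pow_eq {j : ℕ} {u v : ZMod (2 ^ d)}
    (h : (4 : ZMod (2 ^ d)) ^ j * u = (4 : ZMod (2 ^ d)) ^ j * v) :
    (mGraph 4 (ZMod (2 ^ d))).edist u v ≤ 2 * j := by
  calc (mGraph 4 (ZMod (2 ^ d))).edist u v
      ≤ (mGraph 4 (ZMod (2 ^ d))).edist u ((4 : ZMod (2 ^ d)) ^ j * u)
        + (mGraph 4 (ZMod (2 ^ d))).edist ((4 : ZMod (2 ^ d)) ^ j * u) v :=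
        SimpleGraph.edist_triangle
    _ ≤ j + j := by
        refine add_le_add (edist_le_pow j u) ?_
        rw [h, SimpleGraph.edist_comm]
        exact edist_le_pow j v
    _ = (2 * j : ℕ) := by push_cast; ring

lemma pow_mul_eq_zero {j : ℕ} (x : ZMod (2 ^ d)) (h : 2 ^ d ∣ 4 ^ j * x.val) :
    (4 : ZMod (2 ^ d)) ^ j * x = 0 := by
  have : ((4 ^ j * x.val : ℕ) : ZMod (2 ^ d)) = 0 :=
    (ZMod.natCast_eq_zero_iff _ _).mpr h
  rw [← cast_val x]
  push_cast at this ⊢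
  exact this

lemma two_pow_dvd_four_pow {j k : ℕ} (h : k ≤ 2 * j) : (2 : ℕ) ^ k ∣ 4 ^ j := by
  have : (4 : ℕ) ^ j = 2 ^ (2 * j) := by
    rw [show (4 : ℕ) = 2 ^ 2 by norm_num, ← pow_mul]
  rw [this]
  exact pow_dvd_pow 2 h

lemma edist_zero (x : ZMod (2 ^ d)) :
    (mGraph 4 (ZMod (2 ^ d))).edist x 0 ≤ ((d + 1) / 2 : ℕ) := by
  have h0 : (4 : ZMod (2 ^ d)) ^ ((d + 1) / 2) * x = 0 :=
    pow_mul_eq_zero x (dvd_mul_of_dvd_left (two_pow_dvd_four_pow (by omega)) _)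
  have := edist_le_pow ((d + 1) / 2) x
  rwa [h0] at this

lemma edist_zero_even (x : ZMod (2 ^ d)) (h : 2 ∣ x.val) :
    (mGraph 4 (ZMod (2 ^ d))).edist x 0 ≤ (d / 2 : ℕ) := by
  obtain ⟨c, hc⟩ := h
  have h0 : (4 : ZMod (2 ^ d)) ^ (d / 2) * x = 0 := by
    refine pow_mul_eq_zero x ?_
    rw [hc, ← mul_assoc]
    refine dvd_mul_of_dvd_left ?_ c
    have : (4 : ℕ) ^ (d / 2) * 2 = 2 ^ (2 * (d / 2) + 1) := by
      rw [show (4 : ℕ) = 2 ^ 2 by norm_num, ← pow_mul, pow_succ]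
    rw [this]
    exact pow_dvd_pow 2 (by omega)
  have := edist_le_pow (d / 2) x
  rwa [h0] at this


/-- potential function: `±⌈(d - v₂(x))/2⌉` with sign given by parity of `v₂(x)`. -/
def hf (d : ℕ) (x : ZMod (2 ^ d)) : ℤ :=
  if x = 0 then 0
  else if padicValNat 2 x.val % 2 = 0
    then (((d - padicValNat 2 x.val + 1) / 2 : ℕ) : ℤ)
    else -(((d - padicValNat 2 x.val + 1) / 2 : ℕ) : ℤ)

lemma val_ne_zero {x : ZMod (2 ^ d)} (hx : x ≠ 0) : x.val ≠ 0 :=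
  fun h => hx ((ZMod.val_eq_zero x).mp h)

lemma val_lt {x : ZMod (2 ^ d)} (hx : x ≠ 0) : padicValNat 2 x.val < d := by
  by_contra hle
  push_neg at hle
  have h1 : (2 : ℕ) ^ d ∣ x.val := dvd_trans (pow_dvd_pow 2 hle) pow_padicValNat_dvd
  have h2 : x.val < 2 ^ d := ZMod.val_lt x
  have h3 : x.val ≠ 0 := val_ne_zero hx
  have := Nat.le_of_dvd (Nat.pos_of_ne_zero h3) h1
  omega

lemma val_step {x y : ZMod (2 ^ d)} (hx : x ≠ 0) (hy : y ≠ 0) (hxy : y = 4 * x) :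
    padicValNat 2 y.val = padicValNat 2 x.val + 2 ∧ padicValNat 2 x.val + 2 < d := by
  set a := x.val with ha
  set v := padicValNat 2 a with hv
  have ha0 : a ≠ 0 := val_ne_zero hx
  have h4a0 : 4 * a ≠ 0 := by omega
  have hv4a : padicValNat 2 (4 * a) = v + 2 := by
    rw [padicValNat.mul (by norm_num) ha0, show (4 : ℕ) = 2 ^ 2 by norm_num,
      padicValNat.prime_pow, add_comm]
  have hycast : y = ((4 * a : ℕ) : ZMod (2 ^ d)) := by
    rw [hxy, ← cast_val x]
    push_cast
    ring
  have hnd : ¬ (2 ^ d ∣ 4 * a) := by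
    intro h
    exact hy (by rw [hycast, (ZMod.natCast_eq_zero_iff _ _).mpr h])
  have hlt : v + 2 < d := by
    by_contra hle
    push_neg at hle
    exact hnd (dvd_trans (pow_dvd_pow 2 hle) (hv4a ▸ pow_padicValNat_dvd))
  refine ⟨?_, hlt⟩
  have hyval : y.val = 4 * a % 2 ^ d := by rw [hycast, ZMod.val_natCast]
  have hy0 : y.val ≠ 0 := val_ne_zero hy
  have hdvd1 : 2 ^ (v + 2) ∣ y.val := by
    rw [hyval, Nat.mod_def]
    exact Nat.dvd_sub (hv4a ▸ pow_padicValNat_dvd)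
      (dvd_mul_of_dvd_left (pow_dvd_pow 2 (le_of_lt hlt)) _)
  have hndvd : ¬ 2 ^ (v + 3) ∣ y.val := by
    intro h
    have heq : 4 * a = y.val + 2 ^ d * (4 * a / 2 ^ d) := by
      rw [hyval]; exact (Nat.mod_add_div _ _).symm
    have : 2 ^ (v + 3) ∣ 4 * a := by
      rw [heq]
      exact dvd_add h (dvd_mul_of_dvd_left (pow_dvd_pow 2 (by omega)) _)
    have := (padicValNat_dvd_iff_le h4a0).mp this
    omega
  have h1 : v + 2 ≤ padicValNat 2 y.val := (padicValNat_dvd_iff_le hy0).mp hdvd1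
  have h2 : padicValNat 2 y.val < v + 3 := by
    by_contra hc
    push_neg at hc
    exact hndvd (dvd_trans (pow_dvd_pow 2 hc) pow_padicValNat_dvd)
  omega

lemma hf_step {x y : ZMod (2 ^ d)} (hne : x ≠ y) (hxy : y = 4 * x) :
    |hf d x - hf d y| ≤ 1 := by
  rcases eq_or_ne x 0 with hx | hx
  · have : y = 0 := by rw [hxy, hx, mul_zero]
    exact absurd (hx.trans this.symm) hne
  rcases eq_or_ne y 0 with hy | hy
  · -- y = 0 : show |hf x| ≤ 1, i.e. d ≤ v + 2
    have hvd : padicValNat 2 x.val < d := val_lt hx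
    have hdv : d ≤ padicValNat 2 x.val + 2 := by
      by_contra hc
      push_neg at hc
      have hycast : y = ((4 * x.val : ℕ) : ZMod (2 ^ d)) := by
        rw [hxy]
        nth_rewrite 1 [← cast_val x]
        push_cast
        ring
      have hdvd : 2 ^ d ∣ 4 * x.val :=
        (ZMod.natCast_eq_zero_iff _ _).mp (hycast ▸ hy)
      have hv4a : padicValNat 2 (4 * x.val) = padicValNat 2 x.val + 2 := by
        rw [padicValNat.mul (by norm_num) (val_ne_zero hx), show (4 : ℕ) = 2 ^ 2 by norm_num,
          padicValNat.prime_pow, add_comm]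
      have h4a0 : 4 * x.val ≠ 0 := by have := val_ne_zero hx; omega
      have := (padicValNat_dvd_iff_le h4a0).mp hdvd
      omega
    have hb : ((d - padicValNat 2 x.val + 1) / 2 : ℕ) ≤ 1 := by omega
    rw [hf, hf, if_neg hx, if_pos hy]
    rcases Nat.even_or_odd (padicValNat 2 x.val) with he | ho
    · rw [if_pos (Nat.even_iff.mp he)]
      simp only [sub_zero]
      rw [abs_of_nonneg (by positivity)]
      exact_mod_cast hb
    · rw [if_neg (by rw [Nat.odd_iff.mp ho]; norm_num)]
      simp only [sub_zero, abs_neg]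
      rw [abs_of_nonneg (by positivity)]
      exact_mod_cast hb
  · -- both nonzero
    obtain ⟨hstep, hlt⟩ := val_step hx hy hxy
    set v := padicValNat 2 x.val with hv
    have he2 : (d - v + 1) / 2 = (d - (v + 2) + 1) / 2 + 1 := by omega
    rw [hf, hf, if_neg hx, if_neg hy, hstep, ← hv, he2]
    rcases Nat.even_or_odd v with he | ho
    · have he' : v % 2 = 0 := Nat.even_iff.mp he
      rw [if_pos he', if_pos (by omega)]
      generalize ((d - (v + 2) + 1) / 2 : ℕ) = k
      rw [show (((k + 1 : ℕ) : ℤ)) - ((k : ℕ) : ℤ) = 1 by push_cast; ring]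
      norm_num
    · have ho' : v % 2 = 1 := Nat.odd_iff.mp ho
      rw [if_neg (by omega), if_neg (by omega)]
      generalize ((d - (v + 2) + 1) / 2 : ℕ) = k
      rw [show -(((k + 1 : ℕ) : ℤ)) - -((k : ℕ) : ℤ) = -1 by push_cast; ring]
      norm_num

lemma hf_adj {x y : ZMod (2 ^ d)} (h : (mGraph 4 (ZMod (2 ^ d))).Adj x y) :
    |hf d x - hf d y| ≤ 1 := by
  obtain ⟨hne, h4 | h4⟩ := (h : _ ∧ (_ ∨ _))
  · have : y = 4 * x := by rw [← h4, nsmul_eq_mul]; norm_num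
    exact hf_step hne this
  · have : x = 4 * y := by rw [← h4, nsmul_eq_mul]; norm_num
    rw [abs_sub_comm]
    exact hf_step (Ne.symm hne) this

lemma hf_walk {u v : ZMod (2 ^ d)} (p : (mGraph 4 (ZMod (2 ^ d))).Walk u v) :
    |hf d u - hf d v| ≤ (p.length : ℤ) := by
  induction p with
  | nil => simp
  | @cons a b c hadj q ih =>
    calc |hf d a - hf d c| ≤ |hf d a - hf d b| + |hf d b - hf d c| := abs_sub_le _ _ _
      _ ≤ 1 + (q.length : ℤ) := add_le_add (hf_adj hadj) ih
      _ = ((SimpleGraph.Walk.cons hadj q).length : ℤ) := by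
          rw [SimpleGraph.Walk.length_cons]; push_cast; ring


lemma hf_one (hd : 1 ≤ d) : hf d 1 = (((d + 1) / 2 : ℕ) : ℤ) := by
  haveI : Fact (1 < 2 ^ d) := ⟨Nat.one_lt_two_pow_iff.mpr (by omega)⟩
  have h1 : (1 : ZMod (2 ^ d)) ≠ 0 := one_ne_zero
  have hv : (1 : ZMod (2 ^ d)).val = 1 := ZMod.val_one _
  rw [hf, if_neg h1, hv, padicValNat.one, if_pos rfl, Nat.sub_zero]

lemma hf_two (hd : 2 ≤ d) : hf d 2 = -((d / 2 : ℕ) : ℤ) := by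
  have h2cast : (2 : ZMod (2 ^ d)) = ((2 : ℕ) : ZMod (2 ^ d)) := by push_cast; rfl
  have hlt : (2 : ℕ) < 2 ^ d := by
    calc (2 : ℕ) < 4 := by norm_num
    _ = 2 ^ 2 := by norm_num
    _ ≤ 2 ^ d := Nat.pow_le_pow_right (by norm_num) hd
  have hv : (2 : ZMod (2 ^ d)).val = 2 := by
    rw [h2cast, ZMod.val_natCast, Nat.mod_eq_of_lt hlt]
  have h2 : (2 : ZMod (2 ^ d)) ≠ 0 := by
    intro h
    have := (ZMod.val_eq_zero _).mpr h
    rw [hv] at this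
    exact absurd this (by norm_num)
  rw [hf, if_neg h2, hv, padicValNat.self (by norm_num), if_neg (by norm_num)]
  congr 1
  omega

lemma hf_diff (hd : 1 ≤ d) : hf d 1 - hf d 2 = (d : ℤ) := by
  rcases eq_or_lt_of_le hd with h1 | h2
  · -- d = 1
    subst h1
    have h20 : (2 : ZMod (2 ^ 1)) = 0 := by decide
    rw [hf_one le_rfl, h20, hf, if_pos rfl]
    norm_num
  · have hd2 : 2 ≤ d := h2
    rw [hf_one hd, hf_two hd2]
    omega

lemma edist_ne_top (u : ZMod (2 ^ d)) :
    (mGraph 4 (ZMod (2 ^ d))).edist u 0 ≠ ⊤ :=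
  ((edist_zero u).trans_lt (ENat.coe_lt_top _)).ne

lemma connected : (mGraph 4 (ZMod (2 ^ d))).Connected := by
  rw [SimpleGraph.connected_iff]
  refine ⟨fun u v => ?_, ⟨0⟩⟩
  exact (SimpleGraph.reachable_of_edist_ne_top (edist_ne_top u)).trans
    (SimpleGraph.reachable_of_edist_ne_top (edist_ne_top v)).symm

lemma ediam_le : (mGraph 4 (ZMod (2 ^ d))).ediam ≤ (d : ℕ∞) := by
  apply SimpleGraph.ediam_le_of_edist_le
  intro u v
  have tri : ∀ a b : ℕ, (mGraph 4 (ZMod (2 ^ d))).edist u 0 ≤ (a : ℕ∞) →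
      (mGraph 4 (ZMod (2 ^ d))).edist v 0 ≤ (b : ℕ∞) → a + b ≤ d →
      (mGraph 4 (ZMod (2 ^ d))).edist u v ≤ (d : ℕ∞) := by
    intro a b h1 h2 hab
    calc (mGraph 4 (ZMod (2 ^ d))).edist u v
        ≤ (mGraph 4 (ZMod (2 ^ d))).edist u 0 + (mGraph 4 (ZMod (2 ^ d))).edist 0 v :=
          SimpleGraph.edist_triangle
      _ ≤ (a : ℕ∞) + (b : ℕ∞) := by
          rw [SimpleGraph.edist_comm (u := (0 : ZMod (2 ^ d)))]
          exact add_le_add h1 h2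
      _ = ((a + b : ℕ) : ℕ∞) := by push_cast; ring
      _ ≤ (d : ℕ∞) := by exact_mod_cast hab
  rcases Nat.even_or_odd u.val with hu | hu
  · rcases Nat.even_or_odd v.val with hv | hv
    · exact tri (d / 2) (d / 2) (edist_zero_even u hu.two_dvd)
        (edist_zero_even v hv.two_dvd) (by omega)
    · exact tri (d / 2) ((d + 1) / 2) (edist_zero_even u hu.two_dvd) (edist_zero v) (by omega)
  · rcases Nat.even_or_odd v.val with hv | hv
    · exact tri ((d + 1) / 2) (d / 2) (edist_zero u) (edist_zero_even v hv.two_dvd) (by omega)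
    · -- both odd
      have hu1 : u.val % 2 = 1 := Nat.odd_iff.mp hu
      have hv1 : v.val % 2 = 1 := Nat.odd_iff.mp hv
      obtain ⟨t, ht⟩ : (2 : ℤ) ∣ ((u.val : ℤ) - (v.val : ℤ)) := by omega
      have hw : u - v = 2 * ((t : ℤ) : ZMod (2 ^ d)) := by
        have : u - v = (((u.val : ℤ) - (v.val : ℤ) : ℤ) : ZMod (2 ^ d)) := by
          push_cast [cast_val]
          ring
        rw [this, ht]
        push_cast
        ring
      have hkey : (4 : ZMod (2 ^ d)) ^ (d / 2) * u = (4 : ZMod (2 ^ d)) ^ (d / 2) * v := by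
        rw [← sub_eq_zero, ← mul_sub, hw, ← mul_assoc]
        have hz : (4 : ZMod (2 ^ d)) ^ (d / 2) * 2 = 0 := by
          have : ((4 ^ (d / 2) * 2 : ℕ) : ZMod (2 ^ d)) = 0 := by
            rw [ZMod.natCast_eq_zero_iff]
            have h4 : (4 : ℕ) ^ (d / 2) * 2 = 2 ^ (2 * (d / 2) + 1) := by
              rw [show (4 : ℕ) = 2 ^ 2 by norm_num, ← pow_mul, pow_succ]
            rw [h4]
            exact pow_dvd_pow 2 (by omega)
          push_cast at this
          exact this
        rw [hz, zero_mul]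
      calc (mGraph 4 (ZMod (2 ^ d))).edist u v ≤ ((2 * (d / 2) : ℕ) : ℕ∞) :=
            edist_le_of_pow_eq hkey
        _ ≤ (d : ℕ∞) := by exact_mod_cast (by omega : 2 * (d / 2) ≤ d)

lemma ediam_eq (hd : 1 ≤ d) : (mGraph 4 (ZMod (2 ^ d))).ediam = (d : ℕ∞) := by
  refine le_antisymm ediam_le ?_
  obtain ⟨p, hp⟩ := connected.exists_walk_length_eq_edist (1 : ZMod (2 ^ d)) 2
  have hw := hf_walk p
  rw [hf_diff hd] at hw
  rw [abs_of_nonneg (by positivity)] at hw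
  have hlen : d ≤ p.length := by exact_mod_cast hw
  calc (d : ℕ∞) ≤ (p.length : ℕ∞) := by exact_mod_cast hlen
    _ = (mGraph 4 (ZMod (2 ^ d))).edist 1 2 := hp
    _ ≤ (mGraph 4 (ZMod (2 ^ d))).ediam := SimpleGraph.edist_le_ediam

lemma diam_eq (hd : 1 ≤ d) : (mGraph 4 (ZMod (2 ^ d))).diam = d := by
  rw [SimpleGraph.diam, ediam_eq hd]
  exact ENat.toNat_coe d

end Stmt18Aux

theorem stmt_18 (d : ℕ) (hd : 1 ≤ d) :
    ∃ (m n : ℕ), 1 < m ∧ 0 < n ∧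
      (mGraph m (ZMod n)).Connected ∧ (mGraph m (ZMod n)).diam = d :=
  ⟨4, 2 ^ d, by norm_num, pow_pos (by norm_num) d, Stmt18Aux.connected,
    Stmt18Aux.diam_eq hd⟩
end

section
/- Let H = ℤ/n₁ℤ × ⋯ × ℤ/nᵢℤ with i ≥ 2, each nⱼ ≥ 2, and let m > 1 be such that every prime factor of n = n₁⋯nᵢ divides m. For each j let dⱼ = gcd(m, nⱼ). Then in the m-graph of H: the degree of the identity (0,…,0) equals d₁d₂⋯dᵢ − 1; any element (a₁,…,aᵢ) with dⱼ ∤ aⱼ for some j has degree 1; any nonzero element with dⱼ | aⱼ for all j has degree d₁d₂⋯dᵢ + 1; and the m-graph of H is a tree. -/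
open Finset

lemma dvd_pow_self_of_primes (m : ℕ) : ∀ N : ℕ, 0 < N → (∀ p, p.Prime → p ∣ N → p ∣ m) → N ∣ m ^ N := by
  intro N
  induction N using Nat.strong_induction_on with
  | _ N ih =>
    intro hN hp
    rcases eq_or_lt_of_le (show 1 ≤ N from hN) with h1 | h1
    · rw [← h1]; exact one_dvd _
    · obtain ⟨p, pp, pd⟩ := Nat.exists_prime_and_dvd (by omega : N ≠ 1)
      obtain ⟨b, rfl⟩ := pd
      have hb : 0 < b := Nat.pos_of_ne_zero (by rintro rfl; simp at hN)
      have h2 : 2 ≤ p := pp.two_le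
      have hblt : b < p * b := by nlinarith
      have hbd : b ∣ m ^ b := ih b hblt hb (fun q hq hqd => hp q hq (hqd.mul_left p))
      calc p * b ∣ m * m ^ b := mul_dvd_mul (hp p pp ⟨b, rfl⟩) hbd
        _ = m ^ (b + 1) := by ring
        _ ∣ m ^ (p * b) := pow_dvd_pow m (by nlinarith)

lemma nat_ker {d m' k' v : ℕ} (hco : Nat.Coprime m' k') (hd : 0 < d) :
    d * k' ∣ d * m' * v ↔ k' ∣ v := by
  constructor
  · intro h
    have h2 : d * (k' * 1) ∣ d * (m' * v) := by
      rw [mul_one]; rwa [mul_assoc] at h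
    have h3 : k' * 1 ∣ m' * v := (mul_dvd_mul_iff_left (by omega : d ≠ 0)).1 h2
    rw [mul_one] at h3
    exact Nat.Coprime.dvd_of_dvd_mul_left hco.symm h3
  · rintro ⟨c, rfl⟩
    exact ⟨m' * c, by ring⟩

lemma zmod_mul_eq_natCast {k : ℕ} [NeZero k] (m : ℕ) (y : ZMod k) :
    (m : ZMod k) * y = ((m * y.val : ℕ) : ZMod k) := by
  rw [Nat.cast_mul, ZMod.natCast_rightInverse y]

lemma zmod_mul_eq_zero_iff {k : ℕ} [NeZero k] (m : ℕ) (y : ZMod k) :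
    (m : ZMod k) * y = 0 ↔ k ∣ m * y.val := by
  rw [zmod_mul_eq_natCast, ZMod.natCast_eq_zero_iff]

lemma zmod_ker {k : ℕ} [NeZero k] (m : ℕ) (x : ZMod k) :
    (m : ZMod k) * x = 0 ↔ (k / Nat.gcd m k) ∣ x.val := by
  have hk : 0 < k := Nat.pos_of_ne_zero (NeZero.ne k)
  set d := Nat.gcd m k with hd
  have hd0 : 0 < d := Nat.gcd_pos_of_pos_right m hk
  obtain ⟨m', hm'⟩ : d ∣ m := Nat.gcd_dvd_left m k
  obtain ⟨k', hk'⟩ : d ∣ k := Nat.gcd_dvd_right m k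
  have hco : Nat.Coprime m' k' := by
    have h := Nat.coprime_div_gcd_div_gcd (m := m) (n := k) hd0
    rwa [show m / d = m' by rw [hm']; exact Nat.mul_div_cancel_left _ hd0,
      show k / d = k' by rw [hk']; exact Nat.mul_div_cancel_left _ hd0] at h
  have he : k / d = k' := by rw [hk']; exact Nat.mul_div_cancel_left _ hd0
  rw [he, zmod_mul_eq_zero_iff]
  have h2 : k ∣ m * x.val ↔ d * k' ∣ d * m' * x.val := by rw [← hk', ← hm']
  rw [h2, nat_ker hco hd0]

lemma zmod_dvd_of_eq {k m : ℕ} [NeZero k] {x c : ZMod k} (h : (m : ZMod k) * x = c) :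
    Nat.gcd m k ∣ c.val := by
  have h1 : ((m * x.val : ℕ) : ZMod k) = c := by rw [← zmod_mul_eq_natCast, h]
  have hval : c.val = (m * x.val) % k := by rw [← h1, ZMod.val_natCast]
  rw [hval]
  exact (Nat.dvd_mod_iff (Nat.gcd_dvd_right m k)).2
    (Dvd.dvd.mul_right (Nat.gcd_dvd_left m k) _)

lemma zmod_fiber_card {k : ℕ} [NeZero k] (m : ℕ) (c : ZMod k)
    (hc : Nat.gcd m k ∣ c.val) :
    (univ.filter fun x : ZMod k => (m : ZMod k) * x = c).card = Nat.gcd m k := by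
  have hker : ∀ y : ZMod k, (m : ZMod k) * y = 0 ↔ (k / Nat.gcd m k) ∣ y.val :=
    fun y => zmod_ker m y
  have hk : 0 < k := Nat.pos_of_ne_zero (NeZero.ne k)
  set d := Nat.gcd m k with hd
  set e := k / d with he
  have hd0 : 0 < d := Nat.gcd_pos_of_pos_right m hk
  have hde : d * e = k := Nat.mul_div_cancel' (Nat.gcd_dvd_right m k)
  have he0 : 0 < e := by
    rcases Nat.eq_zero_or_pos e with h | h
    · rw [h, mul_zero] at hde; omega
    · exact h
  have hek : e ∣ k := ⟨d, by rw [← hde]; ring⟩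
  have hA : (m : ZMod k) * ((Nat.gcdA m k : ℤ) : ZMod k) = (d : ZMod k) := by
    have hb := Nat.gcd_eq_gcd_ab m k
    have h2 : ((d : ℤ) : ZMod k) = ((m * Nat.gcdA m k + k * Nat.gcdB m k : ℤ) : ZMod k) := by
      rw [← hb]
    push_cast at h2
    rw [ZMod.natCast_self, zero_mul, add_zero] at h2
    rw [← h2]
  set x₀ : ZMod k := ((Nat.gcdA m k : ℤ) : ZMod k) * ((c.val / d : ℕ) : ZMod k) with hx₀
  have hx₀c : (m : ZMod k) * x₀ = c := by
    rw [hx₀, ← mul_assoc, hA, ← Nat.cast_mul, Nat.mul_div_cancel' hc,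
      ZMod.natCast_rightInverse c]
  have hiv : ∀ x : ZMod k, (x - x₀).val / e < d := by
    intro x
    have : (x - x₀).val < k := ZMod.val_lt _
    rw [Nat.div_lt_iff_lt_mul he0]
    omega
  have hmul0 : ∀ b : ℕ, (m : ZMod k) * ((b * e : ℕ) : ZMod k) = 0 := by
    intro b
    rw [hker]
    rw [ZMod.val_natCast]
    exact (Nat.dvd_mod_iff hek).2 (dvd_mul_left e b)
  rw [show d = Fintype.card (Fin d) by simp, ← Finset.card_univ]
  apply Finset.card_nbij' (i := fun x => (⟨(x - x₀).val / e, hiv x⟩ : Fin d))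
    (j := fun b => x₀ + (((b : ℕ) * e : ℕ) : ZMod k))
  · intro x _; exact mem_univ _
  · intro b _
    simp only [mem_coe, mem_filter, mem_univ, true_and]
    rw [mul_add, hx₀c, hmul0, add_zero]
  · intro x hx
    simp only [mem_coe, mem_filter, mem_univ, true_and] at hx
    have h0 : (m : ZMod k) * (x - x₀) = 0 := by rw [mul_sub, hx, hx₀c, sub_self]
    have hdvd : e ∣ (x - x₀).val := (hker _).1 h0
    simp only
    rw [Nat.div_mul_cancel hdvd, ZMod.natCast_rightInverse (x - x₀)]
    ring
  · intro b _
    apply Fin.ext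
    show (x₀ + (((b : ℕ) * e : ℕ) : ZMod k) - x₀).val / e = (b : ℕ)
    have hz : x₀ + (((b : ℕ) * e : ℕ) : ZMod k) - x₀ = (((b : ℕ) * e : ℕ) : ZMod k) := by ring
    rw [hz, ZMod.val_natCast, Nat.mod_eq_of_lt, Nat.mul_div_cancel _ he0]
    calc (b : ℕ) * e < d * e := by
          have : (b : ℕ) < d := b.isLt
          exact (Nat.mul_lt_mul_right he0).2 this
      _ = k := hde

lemma nodup_ne_of_append {α : Type*} {a b : α} {t A : List α}
    (h : a :: t = A ++ [b]) (hA : A ≠ []) (hnd : (a :: t).Nodup) : a ≠ b := by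
  cases A with
  | nil => exact absurd rfl hA
  | cons a' A' =>
    simp only [List.cons_append, List.cons.injEq] at h
    obtain ⟨rfl, ht⟩ := h
    have hb : b ∈ t := by rw [ht]; simp
    intro hab
    exact (List.nodup_cons.1 hnd).1 (hab ▸ hb)

theorem stmt_19 (i : ℕ) (hi : 2 ≤ i) (n : Fin i → ℕ)
    (hn : ∀ j, 2 ≤ n j) [∀ j, NeZero (n j)]
    (m : ℕ) (hm : 1 < m)
    (hp : ∀ p : ℕ, p.Prime → p ∣ (∏ j, n j) → p ∣ m) :
    (mGraph m (∀ j, ZMod (n j))).degree 0 = (∏ j, Nat.gcd m (n j)) - 1 ∧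
    (∀ a : ∀ j, ZMod (n j), (∃ j, ¬ Nat.gcd m (n j) ∣ (a j).val) →
      (mGraph m (∀ j, ZMod (n j))).degree a = 1) ∧
    (∀ a : ∀ j, ZMod (n j), a ≠ 0 → (∀ j, Nat.gcd m (n j) ∣ (a j).val) →
      (mGraph m (∀ j, ZMod (n j))).degree a = (∏ j, Nat.gcd m (n j)) + 1) ∧
    (mGraph m (∀ j, ZMod (n j))).IsTree := by
  classical
  set H := ∀ j, ZMod (n j) with hH
  set G := mGraph m H with hG
  have hnz : ∀ j, 0 < n j := fun j => by have := hn j; omega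
  have hprimes : ∀ j, ∀ p : ℕ, p.Prime → p ∣ n j → p ∣ m := by
    intro j p pp hd
    exact hp p pp (hd.trans (Finset.dvd_prod_of_mem _ (mem_univ j)))
  set K := ∏ j, n j with hKdef
  have hleK : ∀ j, n j ≤ K := by
    intro j
    exact Finset.single_le_prod' (fun j' _ => by have := hnz j'; omega) (mem_univ j)
  have hK : ∀ j, n j ∣ m ^ K := by
    intro j
    exact (dvd_pow_self_of_primes m (n j) (hnz j) (hprimes j)).trans
      (pow_dvd_pow m (hleK j))
  have hzero : ∀ x : H, (m ^ K) • x = 0 := by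
    intro x
    funext j
    show (m ^ K) • x j = 0
    rw [nsmul_eq_mul]
    have h0 : ((m ^ K : ℕ) : ZMod (n j)) = 0 :=
      (ZMod.natCast_eq_zero_iff _ _).2 (hK j)
    rw [h0, zero_mul]
  have hcop : ∀ j, Nat.Coprime (m - 1) (n j) := by
    intro j
    by_contra hcon
    obtain ⟨q, hq, hq1⟩ := Nat.exists_prime_and_dvd hcon
    have hq2 : q ∣ m - 1 := hq1.trans (Nat.gcd_dvd_left _ _)
    have hq3 : q ∣ n j := hq1.trans (Nat.gcd_dvd_right _ _)
    have hq4 : q ∣ m := hprimes j q hq hq3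
    have : q ∣ 1 := by
      have := Nat.dvd_sub hq4 hq2
      rwa [show m - (m - 1) = 1 by omega] at this
    exact hq.one_lt.ne' (Nat.dvd_one.1 this)
  have hfix : ∀ x : H, m • x = x → x = 0 := by
    intro x hx
    funext j
    have hxj : (m : ZMod (n j)) * x j = x j := by
      rw [← nsmul_eq_mul]; exact congrFun hx j
    have hsub : ((m - 1 : ℕ) : ZMod (n j)) * x j = 0 := by
      rw [Nat.cast_sub (by omega : 1 ≤ m), Nat.cast_one, sub_mul, one_mul, hxj, sub_self]
    have hu : IsUnit ((m - 1 : ℕ) : ZMod (n j)) :=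
      (ZMod.isUnit_iff_coprime _ _).2 (hcop j)
    have := (IsUnit.mul_right_eq_zero hu).1 hsub
    exact this
  have hfix' : ∀ x : H, x ≠ 0 → m • x ≠ x := fun x hx h => hx (hfix x h)
  have hns : ∀ a : H, a ≠ 0 → m • (m • a) ≠ a := by
    intro a ha hcon
    apply ha
    have h2 : ∀ t : ℕ, (m * m) ^ t • a = a := by
      intro t
      induction t with
      | zero => simp
      | succ t ih =>
        rw [pow_succ, mul_smul, show (m * m) • a = m • (m • a) by rw [mul_smul], hcon, ih]
    have h3 : (m * m) ^ K • a = a := h2 K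
    have h4 : (m * m) ^ K • a = 0 := by
      rw [show (m * m) ^ K = m ^ K * m ^ K by ring, mul_smul, hzero]
    exact h3.symm.trans h4
  -- heights
  have hex : ∀ x : H, ∃ t, m ^ t • x = 0 := fun x => ⟨K, hzero x⟩
  set h : H → ℕ := fun x => Nat.find (hex x) with hhdef
  have hspec : ∀ x : H, m ^ (h x) • x = 0 := fun x => Nat.find_spec (hex x)
  have hh0 : ∀ x : H, x ≠ 0 → 0 < h x := by
    intro x hx
    rcases Nat.eq_zero_or_pos (h x) with h0 | h0
    · exfalso; apply hx
      have := hspec x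
      rwa [h0, pow_zero, one_smul] at this
    · exact h0
  have hdesc : ∀ x : H, x ≠ 0 → h (m • x) < h x := by
    intro x hx
    have h1 : 0 < h x := hh0 x hx
    have h2 : m ^ (h x - 1) • (m • x) = 0 := by
      rw [smul_smul, ← pow_succ, show h x - 1 + 1 = h x by omega]
      exact hspec x
    have h3 : h (m • x) ≤ h x - 1 := Nat.find_le h2
    omega
  have hadj_dich : ∀ u w : H, G.Adj u w → w = m • u ∨ h u < h w := by
    rintro u w ⟨hne, hcase | hcase⟩
    · exact Or.inl hcase.symm
    · right
      have hw0 : w ≠ 0 := by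
        rintro rfl
        apply hne
        rw [← hcase, smul_zero]
      rw [← hcase]
      exact hdesc w hw0
  -- fibers
  have hfibcard : ∀ a : H, (∀ j, Nat.gcd m (n j) ∣ (a j).val) →
      (univ.filter fun x : H => m • x = a).card = ∏ j, Nat.gcd m (n j) := by
    intro a ha
    have hset : (univ.filter fun x : H => m • x = a) =
        Fintype.piFinset (fun j => univ.filter fun y : ZMod (n j) => (m : ZMod (n j)) * y = a j) := by
      ext x
      rw [mem_filter, Fintype.mem_piFinset]
      simp only [mem_filter, mem_univ, true_and]
      constructor
      · intro hx j; rw [← nsmul_eq_mul]; exact congrFun hx j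
      · intro hx
        funext j
        rw [show (m • x) j = m • x j from rfl, nsmul_eq_mul]
        exact hx j
    rw [hset, Fintype.card_piFinset]
    exact Finset.prod_congr rfl fun j _ => zmod_fiber_card m (a j) (ha j)
  have hfib_empty : ∀ a : H, (∃ j, ¬ Nat.gcd m (n j) ∣ (a j).val) → ∀ x : H, m • x ≠ a := by
    rintro a ⟨j, hj⟩ x hx
    apply hj
    apply zmod_dvd_of_eq (x := x j)
    rw [← nsmul_eq_mul]
    exact congrFun hx j
  refine ⟨?_, ?_, ?_, ?_⟩
  · -- degree of 0
    have hnb : G.neighborFinset 0 = (univ.filter fun x : H => m • x = 0).erase 0 := by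
      ext x
      rw [SimpleGraph.mem_neighborFinset, mem_erase, mem_filter]
      constructor
      · rintro ⟨hne, hcase | hcase⟩
        · exact absurd (hcase.symm.trans (smul_zero m)) (Ne.symm hne)
        · exact ⟨Ne.symm hne, mem_univ x, hcase⟩
      · rintro ⟨hne, _, hx⟩
        exact ⟨Ne.symm hne, Or.inr hx⟩
    rw [SimpleGraph.degree, hnb, Finset.card_erase_of_mem
      (by simp only [mem_filter, mem_univ, true_and]; exact smul_zero m),
      hfibcard 0 (fun j => by
        show Nat.gcd m (n j) ∣ (0 : ZMod (n j)).val
        rw [ZMod.val_zero]; exact dvd_zero _)]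
  · -- degree of bad a
    intro a ha
    have ha0 : a ≠ 0 := by
      rintro rfl
      obtain ⟨j, hj⟩ := ha
      apply hj
      show Nat.gcd m (n j) ∣ (0 : ZMod (n j)).val
      rw [ZMod.val_zero]; exact dvd_zero _
    have hnb : G.neighborFinset a = {m • a} := by
      ext x
      rw [SimpleGraph.mem_neighborFinset, mem_singleton]
      constructor
      · rintro ⟨hne, hcase | hcase⟩
        · exact hcase.symm
        · exact absurd hcase (hfib_empty a ha x)
      · rintro rfl
        exact ⟨Ne.symm (hfix' a ha0), Or.inl rfl⟩
    rw [SimpleGraph.degree, hnb, Finset.card_singleton]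
  · -- degree of good nonzero a
    intro a ha0 ha
    have hnb : G.neighborFinset a = insert (m • a) (univ.filter fun x : H => m • x = a) := by
      ext x
      rw [SimpleGraph.mem_neighborFinset, mem_insert, mem_filter]
      constructor
      · rintro ⟨hne, hcase | hcase⟩
        · exact Or.inl hcase.symm
        · exact Or.inr ⟨mem_univ x, hcase⟩
      · rintro (rfl | ⟨_, hx⟩)
        · exact ⟨Ne.symm (hfix' a ha0), Or.inl rfl⟩
        · refine ⟨?_, Or.inr hx⟩
          rintro rfl
          exact hfix' a ha0 hx
    rw [SimpleGraph.degree, hnb, Finset.card_insert_of_notMem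
      (by
        simp only [mem_filter, mem_univ, true_and]
        exact hns a ha0),
      hfibcard a ha]
  · -- tree
    have hreach : ∀ x : H, G.Reachable x 0 := by
      have main : ∀ t : ℕ, ∀ x : H, h x = t → G.Reachable x 0 := by
        intro t
        induction t using Nat.strong_induction_on with
        | _ t ih =>
          intro x hx
          by_cases h0 : x = 0
          · subst h0; exact SimpleGraph.Reachable.refl _
          · have hadj : G.Adj x (m • x) := ⟨Ne.symm (hfix' x h0), Or.inl rfl⟩
            exact hadj.reachable.trans (ih (h (m • x)) (hx ▸ hdesc x h0) (m • x) rfl)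
      exact fun x => main (h x) x rfl
    refine ⟨SimpleGraph.Connected.mk (fun x y => (hreach x).trans (hreach y).symm), ?_⟩
    intro v c hc
    have hvsup : v ∈ c.support.toFinset := List.mem_toFinset.2 c.start_mem_support
    obtain ⟨u, hu, hmax⟩ := Finset.exists_max_image c.support.toFinset h ⟨v, hvsup⟩
    have hu' : u ∈ c.support := List.mem_toFinset.1 hu
    set c' := c.rotate u hu' with hc'def
    have hc' : c'.IsCycle := hc.rotate hu'
    have hsup_le : ∀ x ∈ c'.support, h x ≤ h u := by
      intro x hx
      apply hmax x
      apply List.mem_toFinset.2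
      rcases (by rwa [c'.support_eq_cons, List.mem_cons] at hx : x = u ∨ x ∈ c'.support.tail)
        with rfl | hx'
      · exact hu'
      · have hrot := SimpleGraph.Walk.support_rotate c u hu'
        have : x ∈ c.support.tail := (hrot.mem_iff).1 hx'
        rw [c.support_eq_cons]
        exact List.mem_cons_of_mem _ this
    obtain ⟨w, hadj1, q1, hq1⟩ := SimpleGraph.Walk.not_nil_iff.1 hc'.not_nil
    have hrevnotnil : ¬ c'.reverse.Nil := by
      rw [SimpleGraph.Walk.not_nil_iff_lt_length, SimpleGraph.Walk.length_reverse]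
      have := hc'.three_le_length
      omega
    obtain ⟨y, hadj2, q2, hq2⟩ := SimpleGraph.Walk.not_nil_iff.1 hrevnotnil
    have hw_sup : w ∈ c'.support := by
      rw [hq1, SimpleGraph.Walk.support_cons]
      exact List.mem_cons_of_mem _ q1.start_mem_support
    have hy_sup : y ∈ c'.support := by
      have : y ∈ c'.reverse.support := by
        rw [hq2, SimpleGraph.Walk.support_cons]
        exact List.mem_cons_of_mem _ q2.start_mem_support
      rwa [SimpleGraph.Walk.support_reverse, List.mem_reverse] at this
    -- w ≠ y via edge lists
    have hE1 : c'.edges = s(u, w) :: q1.edges := by rw [hq1, SimpleGraph.Walk.edges_cons]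
    have hE2 : c'.edges = q2.edges.reverse ++ [s(u, y)] := by
      have : c'.reverse.edges = s(u, y) :: q2.edges := by
        rw [hq2, SimpleGraph.Walk.edges_cons]
      rw [← List.reverse_reverse c'.edges, ← SimpleGraph.Walk.edges_reverse, this,
        List.reverse_cons]
    have hAne : q2.edges.reverse ≠ [] := by
      have hlen : q2.edges.length = c'.length - 1 := by
        have h1 : c'.reverse.length = q2.length + 1 := by
          rw [hq2, SimpleGraph.Walk.length_cons]
        rw [SimpleGraph.Walk.length_reverse] at h1
        rw [SimpleGraph.Walk.length_edges, h1]
        omega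
      have h3 := hc'.three_le_length
      intro hnil
      rw [← List.length_eq_zero_iff] at hnil
      rw [List.length_reverse] at hnil
      omega
    have hndup : (s(u, w) :: q1.edges).Nodup := by
      rw [← hE1]
      exact hc'.isCircuit.isTrail.edges_nodup
    have hwy : w ≠ y := by
      have hne := nodup_ne_of_append (hE1.symm.trans hE2) hAne hndup
      intro hcon
      apply hne
      rw [hcon]
    have hw_eq : w = m • u := by
      rcases hadj_dich u w hadj1 with he | hlt
      · exact he
      · exact absurd (hsup_le w hw_sup) (by omega)
    have hy_eq : y = m • u := by
      rcases hadj_dich u y hadj2 with he | hlt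
      · exact he
      · exact absurd (hsup_le y hy_sup) (by omega)
    exact hwy (hw_eq.trans hy_eq.symm)
end
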